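/- arXiv:1504.00800 — 4 statements merged into one kernel-verified Lean document; each statement's English description precedes it below -/
import Mathlib

section
/- Let n ≥ 1 and let A be an n×n nonnegative real matrix whose max-times spectral radius λ(A) is positive. Then the infimum over all positive vectors x ∈ ℝ_{>0}^n of max_{i,j} A_{ij} x_j / x_i equals λ(A), and the infimum is attained. -/
open scoped BigOperators

noncomputable section

/-- The max-times spectral radius (maximum geometric cycle mean) of a
nonnegative `n × n` real matrix. -/
def mtSpecRad {n : ℕ} (A : Matrix (Fin n) (Fin n) ℝ) : ℝ :=
  sSup { r : ℝ | ∃ (k : ℕ) (hk : 0 < k), k ≤ n ∧ ∃ f : Fin k → Fin n,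
    r = (∏ t : Fin k, A (f t) (f ⟨((t : ℕ) + 1) % k, Nat.mod_lt _ hk⟩)) ^ ((k : ℝ)⁻¹) }

/-- The maximum cycle mean of a real `n × n` matrix (max-plus spectral radius). -/
def mpCycleMean {n : ℕ} (A : Matrix (Fin n) (Fin n) ℝ) : ℝ :=
  sSup { r : ℝ | ∃ (k : ℕ) (hk : 0 < k), k ≤ n ∧ ∃ f : Fin k → Fin n,
    r = (∑ t : Fin k, A (f t) (f ⟨((t : ℕ) + 1) % k, Nat.mod_lt _ hk⟩)) / (k : ℝ) }

/-- Max-times matrix product. -/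
def mtMul {n : ℕ} (A B : Matrix (Fin n) (Fin n) ℝ) : Matrix (Fin n) (Fin n) ℝ :=
  Matrix.of fun i j => ⨆ k : Fin n, A i k * B k j

/-- Max-times matrix powers, with `A^{⊗0} = I`. -/
def mtPow {n : ℕ} (A : Matrix (Fin n) (Fin n) ℝ) : ℕ → Matrix (Fin n) (Fin n) ℝ
  | 0 => Matrix.of fun i j => if i = j then 1 else 0
  | (k + 1) => mtMul (mtPow A k) A

/-- Max-times Kleene star: entrywise maximum of `I, S, S^{⊗2}, …, S^{⊗(n-1)}`. -/
def mtStar {n : ℕ} (S : Matrix (Fin n) (Fin n) ℝ) : Matrix (Fin n) (Fin n) ℝ :=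
  Matrix.of fun i j => ⨆ k : Fin n, mtPow S (k : ℕ) i j

/-- Max-times matrix-vector product. -/
def mtVecMul {n : ℕ} (S : Matrix (Fin n) (Fin n) ℝ) (u : Fin n → ℝ) : Fin n → ℝ :=
  fun i => ⨆ j, S i j * u j

/-- Max-plus matrix product. -/
def mpMul {n : ℕ} (A B : Matrix (Fin n) (Fin n) ℝ) : Matrix (Fin n) (Fin n) ℝ :=
  Matrix.of fun i j => ⨆ k : Fin n, (A i k + B k j)

/-- `mpPow A k` is the max-plus power `A^{⊗(k+1)}`. -/
def mpPow {n : ℕ} (A : Matrix (Fin n) (Fin n) ℝ) : ℕ → Matrix (Fin n) (Fin n) ℝ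
  | 0 => A
  | (k + 1) => mpMul (mpPow A k) A

/-- Max-plus Kleene star: `S^*_{ii} = max(0, max_{1≤k≤n-1} (S^{⊗k})_{ii})` and
`S^*_{ij} = max_{1≤k≤n-1} (S^{⊗k})_{ij}` for `i ≠ j`. -/
def mpStar {n : ℕ} (S : Matrix (Fin n) (Fin n) ℝ) : Matrix (Fin n) (Fin n) ℝ :=
  Matrix.of fun i j =>
    if i = j then max 0 (⨆ k : Fin (n - 1), mpPow S (k : ℕ) i j)
    else ⨆ k : Fin (n - 1), mpPow S (k : ℕ) i j

/-- Max-plus matrix-vector product. -/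
def mpVecMul {n : ℕ} (S : Matrix (Fin n) (Fin n) ℝ) (x : Fin n → ℝ) : Fin n → ℝ :=
  fun i => ⨆ j, (S i j + x j)

/-- Chebyshev-like (max-times) distance between a nonnegative matrix `A` and the
rank-one reciprocal matrix with entries `x i / x j`. -/
def mtRho {n : ℕ} (A : Matrix (Fin n) (Fin n) ℝ) (x : Fin n → ℝ) : ℝ :=
  max (⨆ p : Fin n × Fin n, A p.1 p.2 * x p.2 / x p.1)
    (sSup { r : ℝ | ∃ i j, 0 < A i j ∧ r = x i / (A i j * x j) })

/-- The alternating max-times product `A ⊗ C^{⊗ i₁} ⊗ A ⊗ C^{⊗ i₂} ⊗ ⋯ ⊗ A ⊗ C^{⊗ i_k}`. -/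
def mtChain {n : ℕ} (A C : Matrix (Fin n) (Fin n) ℝ) :
    (k : ℕ) → (Fin k → ℕ) → Matrix (Fin n) (Fin n) ℝ
  | 0, _ => Matrix.of fun i j => if i = j then 1 else 0
  | (k + 1), f => mtMul (mtMul A (mtPow C (f 0))) (mtChain A C k (fun t => f t.succ))

/-- The optimal value `θ` of the constrained max-times approximation problem. -/
def mtTheta {n : ℕ} (A C : Matrix (Fin n) (Fin n) ℝ) : ℝ :=
  max (mtSpecRad A)
    (sSup { r : ℝ | ∃ k : ℕ, 0 < k ∧ k ≤ n - 1 ∧ ∃ f : Fin k → ℕ,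
      1 ≤ ∑ t, f t ∧ (∑ t, f t) ≤ n - k ∧
      r = (⨆ i, mtChain A C k f i i) ^ ((k : ℝ)⁻¹) })



namespace MTAux
variable {n : ℕ}

/-- walk product along a list of successive vertices -/
def wprod (A : Matrix (Fin n) (Fin n) ℝ) : Fin n → List (Fin n) → ℝ
  | _, [] => 1
  | i, (j :: l) => A i j * wprod A j l

lemma wprod_nil (A : Matrix (Fin n) (Fin n) ℝ) (i : Fin n) : wprod A i [] = 1 := rfl
lemma wprod_cons (A : Matrix (Fin n) (Fin n) ℝ) (i j : Fin n) (l : List (Fin n)) :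
    wprod A i (j :: l) = A i j * wprod A j l := rfl

lemma wprod_nonneg {A : Matrix (Fin n) (Fin n) ℝ} (hA : ∀ i j, 0 ≤ A i j)
    (i : Fin n) (l : List (Fin n)) : 0 ≤ wprod A i l := by
  induction l generalizing i with
  | nil => norm_num [wprod]
  | cons j l ih => exact mul_nonneg (hA _ _) (ih j)

lemma wprod_append (A : Matrix (Fin n) (Fin n) ℝ) (i j : Fin n) (l₁ l₂ : List (Fin n)) :
    wprod A i (l₁ ++ j :: l₂) = wprod A i (l₁ ++ [j]) * wprod A j l₂ := by
  induction l₁ generalizing i with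
  | nil => simp [wprod]
  | cons a l ih => simp only [List.cons_append, wprod_cons, ih, mul_assoc]

lemma wprod_path (A : Matrix (Fin n) (Fin n) ℝ) (u : Fin n) (L : List (Fin n)) :
    wprod A u L = ∏ t : Fin L.length, A ((u :: L).get t.castSucc) (L.get t) := by
  induction L generalizing u with
  | nil => simp [wprod]
  | cons j L ih =>
    rw [wprod_cons, ih]
    simp only [List.length_cons]
    rw [Fin.prod_univ_succ]
    simp [Fin.succ_castSucc, - Fin.castSucc_succ]

lemma exists_dup_split {α : Type*} (l : List α) (h : ¬ l.Nodup) :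
    ∃ (p : List α) (a : α) (q r : List α), l = p ++ a :: q ++ a :: r := by
  induction l with
  | nil => simp at h
  | cons a l ih =>
    by_cases ha : a ∈ l
    · obtain ⟨q, r, rfl⟩ := List.append_of_mem ha
      exact ⟨[], a, q, r, by simp⟩
    · obtain ⟨p, b, q, r, rfl⟩ := ih (fun hnd => h (List.nodup_cons.mpr ⟨ha, hnd⟩))
      exact ⟨a :: p, b, q, r, by simp⟩

lemma wprod_cycle (A : Matrix (Fin n) (Fin n) ℝ) (v : Fin n) (Q : List (Fin n)) :
    wprod A v (Q ++ [v]) =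
      ∏ t : Fin (Q.length + 1), A ((v :: Q).get t)
        ((v :: Q).get ⟨((t : ℕ) + 1) % (Q.length + 1),
          Nat.mod_lt _ (Nat.succ_pos _)⟩) := by
  rw [wprod_path]
  have hlen : (Q ++ [v]).length = Q.length + 1 := by simp
  refine Fintype.prod_equiv (finCongr hlen) _ _ (fun t => ?_)
  have ht : (t : ℕ) < Q.length + 1 := by omega
  congr 1
  · have h2 : (v :: (Q ++ [v])) = (v :: Q) ++ [v] := by simp
    rw [List.get_eq_getElem, List.get_eq_getElem]
    simp only [h2, Fin.coe_castSucc, finCongr_apply, Fin.coe_cast]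
    rw [List.getElem_append_left]
  · rw [List.get_eq_getElem, List.get_eq_getElem]
    simp only [finCongr_apply, Fin.coe_cast]
    rcases Nat.lt_or_ge ((t : ℕ) + 1) (Q.length + 1) with h | h
    · have h' : (t : ℕ) < Q.length := by omega
      simp only [Nat.mod_eq_of_lt h]
      rw [List.getElem_append_left h']
      simp [List.getElem_cons_succ]
    · have h' : (t : ℕ) = Q.length := by omega
      have h0 : ((t : ℕ) + 1) % (Q.length + 1) = 0 := by
        rw [h']; exact Nat.mod_self _
      simp only [h0]
      rw [List.getElem_append_right (by omega)]
      simp [h']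

/-- The set defining the max-times spectral radius. -/
def specSet (A : Matrix (Fin n) (Fin n) ℝ) : Set ℝ :=
  { r : ℝ | ∃ (k : ℕ) (hk : 0 < k), k ≤ n ∧ ∃ f : Fin k → Fin n,
    r = (∏ t : Fin k, A (f t) (f ⟨((t : ℕ) + 1) % k, Nat.mod_lt _ hk⟩)) ^ ((k : ℝ)⁻¹) }

lemma mtSpecRad_eq (A : Matrix (Fin n) (Fin n) ℝ) : mtSpecRad A = sSup (specSet A) := rfl

lemma specSet_nonempty (hn : 1 ≤ n) (A : Matrix (Fin n) (Fin n) ℝ) :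
    (specSet A).Nonempty := by
  refine ⟨A ⟨0, hn⟩ ⟨0, hn⟩, 1, one_pos, hn, fun _ => ⟨0, hn⟩, ?_⟩
  simp

lemma specSet_bddAbove (hn : 1 ≤ n) (A : Matrix (Fin n) (Fin n) ℝ)
    (hA : ∀ i j, 0 ≤ A i j) : BddAbove (specSet A) := by
  haveI : NeZero n := ⟨by omega⟩
  set C := ⨆ p : Fin n × Fin n, A p.1 p.2 with hCdef
  have hC : ∀ i j, A i j ≤ C := fun i j =>
    le_ciSup (f := fun p : Fin n × Fin n => A p.1 p.2)
      (Set.Finite.bddAbove (Set.finite_range _)) (i, j)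
  have hC0 : 0 ≤ C := le_trans (hA 0 0) (hC 0 0)
  refine ⟨C, fun r hr => ?_⟩
  obtain ⟨k, hk, hkn, f, rfl⟩ := hr
  have hP0 : 0 ≤ ∏ t : Fin k, A (f t) (f ⟨((t : ℕ) + 1) % k, Nat.mod_lt _ hk⟩) :=
    Finset.prod_nonneg fun _ _ => hA _ _
  have hPC : (∏ t : Fin k, A (f t) (f ⟨((t : ℕ) + 1) % k, Nat.mod_lt _ hk⟩)) ≤ C ^ k := by
    calc (∏ t : Fin k, A (f t) (f ⟨((t : ℕ) + 1) % k, Nat.mod_lt _ hk⟩))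
        ≤ ∏ _t : Fin k, C :=
          Finset.prod_le_prod (fun _ _ => hA _ _) (fun _ _ => hC _ _)
      _ = C ^ k := by simp
  calc (∏ t : Fin k, A (f t) (f ⟨((t : ℕ) + 1) % k, Nat.mod_lt _ hk⟩)) ^ ((k : ℝ)⁻¹)
      ≤ (C ^ k) ^ ((k : ℝ)⁻¹) := Real.rpow_le_rpow hP0 hPC (by positivity)
    _ = C := Real.pow_rpow_inv_natCast hC0 hk.ne'

lemma cycle_prod_le (hn : 1 ≤ n) (A : Matrix (Fin n) (Fin n) ℝ)
    (hA : ∀ i j, 0 ≤ A i j) {k : ℕ} (hk : 0 < k) (hkn : k ≤ n) (f : Fin k → Fin n) :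
    (∏ t : Fin k, A (f t) (f ⟨((t : ℕ) + 1) % k, Nat.mod_lt _ hk⟩)) ≤ mtSpecRad A ^ k := by
  set P := ∏ t : Fin k, A (f t) (f ⟨((t : ℕ) + 1) % k, Nat.mod_lt _ hk⟩) with hPdef
  have hP0 : 0 ≤ P := Finset.prod_nonneg fun _ _ => hA _ _
  have hmem : P ^ ((k : ℝ)⁻¹) ∈ specSet A := ⟨k, hk, hkn, f, rfl⟩
  have h1 : P ^ ((k : ℝ)⁻¹) ≤ mtSpecRad A :=
    le_csSup (specSet_bddAbove hn A hA) hmem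
  calc P = (P ^ ((k : ℝ)⁻¹)) ^ k := (Real.rpow_inv_natCast_pow hP0 hk.ne').symm
    _ ≤ mtSpecRad A ^ k := pow_le_pow_left₀ (Real.rpow_nonneg hP0 _) h1 k

/-- Lower bound: the spectral radius is at most the sup for any positive vector. -/
lemma specRad_le_sup (hn : 1 ≤ n) (A : Matrix (Fin n) (Fin n) ℝ)
    (hA : ∀ i j, 0 ≤ A i j) (x : Fin n → ℝ) (hx : ∀ i, 0 < x i) :
    mtSpecRad A ≤ ⨆ p : Fin n × Fin n, A p.1 p.2 * x p.2 / x p.1 := by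
  haveI : NeZero n := ⟨by omega⟩
  set M := ⨆ p : Fin n × Fin n, A p.1 p.2 * x p.2 / x p.1 with hMdef
  have hM : ∀ i j, A i j * x j / x i ≤ M := fun i j =>
    le_ciSup (f := fun p : Fin n × Fin n => A p.1 p.2 * x p.2 / x p.1)
      (Set.Finite.bddAbove (Set.finite_range _)) (i, j)
  have hM0 : 0 ≤ M :=
    le_trans (div_nonneg (mul_nonneg (hA 0 0) (hx 0).le) (hx 0).le) (hM 0 0)
  rw [mtSpecRad_eq]
  refine csSup_le (specSet_nonempty hn A) ?_
  rintro r ⟨k, hk, hkn, f, rfl⟩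
  obtain ⟨k', rfl⟩ : ∃ k', k = k' + 1 := ⟨k - 1, by omega⟩
  set σ : Fin (k' + 1) → Fin (k' + 1) :=
    fun t => ⟨((t : ℕ) + 1) % (k' + 1), Nat.mod_lt _ hk⟩ with hσdef
  have hσ : ∀ t, σ t = finRotate (k' + 1) t := by
    intro t
    rw [finRotate_succ_apply]
    apply Fin.ext
    rw [Fin.val_add_one]
    rcases eq_or_ne t (Fin.last k') with h | h
    · subst h; simp [hσdef, Fin.ext_iff, Fin.val_last, Nat.mod_self]
    · rw [if_neg h]
      have := Fin.val_lt_last h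
      simp only [hσdef]
      exact Nat.mod_eq_of_lt (by omega)
  have hprod : (∏ t, x (f (σ t))) = ∏ t, x (f t) := by
    calc (∏ t, x (f (σ t))) = ∏ t, x (f (finRotate (k' + 1) t)) := by
          refine Finset.prod_congr rfl fun t _ => by rw [hσ]
      _ = ∏ t, x (f t) := Equiv.prod_comp (finRotate (k' + 1)) (fun t => x (f t))
  have hxprod : (0 : ℝ) < ∏ t, x (f t) := Finset.prod_pos fun t _ => hx _
  have heq : (∏ t, A (f t) (f (σ t))) =
      ∏ t, (A (f t) (f (σ t)) * x (f (σ t)) / x (f t)) := by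
    rw [Finset.prod_div_distrib, Finset.prod_mul_distrib, hprod, mul_div_assoc,
      div_self hxprod.ne', mul_one]
  have hle : (∏ t, A (f t) (f (σ t))) ≤ M ^ (k' + 1) := by
    rw [heq]
    calc (∏ t, (A (f t) (f (σ t)) * x (f (σ t)) / x (f t)))
        ≤ ∏ _t : Fin (k' + 1), M :=
          Finset.prod_le_prod
            (fun t _ => div_nonneg (mul_nonneg (hA _ _) (hx _).le) (hx _).le)
            (fun t _ => hM _ _)
      _ = M ^ (k' + 1) := by simp
  have hP0 : 0 ≤ ∏ t, A (f t) (f (σ t)) := Finset.prod_nonneg fun _ _ => hA _ _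
  calc (∏ t, A (f t) (f (σ t))) ^ (((k' + 1 : ℕ) : ℝ)⁻¹)
      ≤ (M ^ (k' + 1)) ^ (((k' + 1 : ℕ) : ℝ)⁻¹) :=
        Real.rpow_le_rpow hP0 hle (by positivity)
    _ = M := Real.pow_rpow_inv_natCast hM0 (Nat.succ_ne_zero _)

/-- The candidate optimal vector. -/
def xvec (B : Matrix (Fin n) (Fin n) ℝ) : Fin n → ℝ :=
  fun i => sSup ((wprod B i) '' { l : List (Fin n) | l.length < n })

lemma xvec_set_finite (B : Matrix (Fin n) (Fin n) ℝ) (i : Fin n) :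
    ((wprod B i) '' { l : List (Fin n) | l.length < n }).Finite :=
  (List.finite_length_lt (Fin n) n).image _

lemma xvec_set_nonempty (hn : 1 ≤ n) (B : Matrix (Fin n) (Fin n) ℝ) (i : Fin n) :
    ((wprod B i) '' { l : List (Fin n) | l.length < n }).Nonempty :=
  ⟨wprod B i [], ⟨[], by simp; omega, rfl⟩⟩

lemma one_le_xvec (hn : 1 ≤ n) (B : Matrix (Fin n) (Fin n) ℝ) (i : Fin n) :
    1 ≤ xvec B i :=
  le_csSup (xvec_set_finite B i).bddAbove ⟨[], by simp; omega, rfl⟩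

lemma wprod_le_xvec (hn : 1 ≤ n) {B : Matrix (Fin n) (Fin n) ℝ}
    (hB : ∀ i j, 0 ≤ B i j)
    (hcyc : ∀ (v : Fin n) (Q : List (Fin n)), Q.length + 1 ≤ n →
      wprod B v (Q ++ [v]) ≤ 1) :
    ∀ (m : ℕ) (i : Fin n) (l : List (Fin n)), l.length = m → wprod B i l ≤ xvec B i := by
  intro m
  induction m using Nat.strong_induction_on with
  | _ m IH =>
  intro i l hl
  by_cases hm : m < n
  · exact le_csSup (xvec_set_finite B i).bddAbove ⟨l, by rw [Set.mem_setOf_eq, hl]; exact hm, rfl⟩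
  · push_neg at hm
    have hnd : ¬ ((i :: l).take (n + 1)).Nodup := by
      intro hnd
      have h1 := hnd.length_le_card
      have h2 : ((i :: l).take (n + 1)).length = n + 1 := by
        simp [List.length_take, hl]; omega
      simp [h2, Fintype.card_fin] at h1
      omega
    obtain ⟨p, v, q, r', hsplit⟩ := exists_dup_split _ hnd
    have htot : i :: l = p ++ v :: (q ++ v :: (r' ++ (i :: l).drop (n + 1))) := by
      conv_lhs => rw [← List.take_append_drop (n + 1) (i :: l)]
      rw [hsplit]
      simp
    have hlenq : q.length + 1 ≤ n := by
      have := congrArg List.length hsplit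
      simp [List.length_take, hl] at this
      omega
    set r := r' ++ (i :: l).drop (n + 1) with hrdef
    have hcyc' := hcyc v q hlenq
    cases p with
    | nil =>
      simp only [List.nil_append] at htot
      injection htot with h1a h1b
      subst h1a
      have hlen' : r.length < m := by
        have := congrArg List.length h1b
        simp at this
        omega
      calc wprod B i l = wprod B i (q ++ [i]) * wprod B i r := by
            rw [h1b, wprod_append B i i q r]
        _ ≤ wprod B i r :=
            mul_le_of_le_one_left (wprod_nonneg hB _ _) hcyc'
        _ ≤ xvec B i := IH r.length hlen' i r rfl
    | cons a p' =>
      rw [List.cons_append] at htot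
      injection htot with h1a h1b
      subst h1a
      have hl2 : l = p' ++ v :: (q ++ v :: r) := h1b
      have hlen' : (p' ++ v :: r).length < m := by
        have := congrArg List.length hl2
        simp at this
        simp
        omega
      calc wprod B i l
          = wprod B i (p' ++ [v]) * wprod B v (q ++ v :: r) := by
            rw [hl2, wprod_append B i v p' (q ++ v :: r)]
        _ = wprod B i (p' ++ [v]) * (wprod B v (q ++ [v]) * wprod B v r) := by
            rw [wprod_append B v v q r]
        _ ≤ wprod B i (p' ++ [v]) * wprod B v r := by
            refine mul_le_mul_of_nonneg_left ?_ (wprod_nonneg hB _ _)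
            exact mul_le_of_le_one_left (wprod_nonneg hB _ _) hcyc'
        _ = wprod B i (p' ++ v :: r) := (wprod_append B i v p' r).symm
        _ ≤ xvec B i := IH _ hlen' i _ rfl

end MTAux

/-- The infimum over positive vectors `x` of `max_{i,j} A_{ij} x_j / x_i`
equals the max-times spectral radius `λ(A)`, and it is attained. -/
theorem mt_unconstrained_min {n : ℕ} (hn : 1 ≤ n) (A : Matrix (Fin n) (Fin n) ℝ)
    (hA : ∀ i j, 0 ≤ A i j) (hlam : 0 < mtSpecRad A) :
    IsLeast { y : ℝ | ∃ x : Fin n → ℝ, (∀ i, 0 < x i) ∧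
        y = ⨆ p : Fin n × Fin n, A p.1 p.2 * x p.2 / x p.1 }
      (mtSpecRad A) := by
  classical
  haveI : NeZero n := ⟨by omega⟩
  set lam := mtSpecRad A with hlamdef
  set B : Matrix (Fin n) (Fin n) ℝ := Matrix.of fun i j => A i j / lam with hBdef
  have hB : ∀ i j, 0 ≤ B i j := fun i j => div_nonneg (hA i j) hlam.le
  have hwdiv : ∀ (i : Fin n) (l : List (Fin n)),
      MTAux.wprod B i l = MTAux.wprod A i l / lam ^ l.length := by
    intro i l
    induction l generalizing i with
    | nil => simp [MTAux.wprod_nil]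
    | cons j l ih =>
      rw [MTAux.wprod_cons, MTAux.wprod_cons, ih]
      simp only [List.length_cons, hBdef, Matrix.of_apply]
      rw [div_mul_div_comm, ← pow_succ']
  have hcyc : ∀ (v : Fin n) (Q : List (Fin n)), Q.length + 1 ≤ n →
      MTAux.wprod B v (Q ++ [v]) ≤ 1 := by
    intro v Q hQ
    rw [hwdiv]
    rw [div_le_one (by positivity)]
    have hlen : (Q ++ [v]).length = Q.length + 1 := by simp
    rw [hlen]
    rw [MTAux.wprod_cycle]
    exact MTAux.cycle_prod_le hn A hA (Nat.succ_pos _) hQ _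
  set x : Fin n → ℝ := MTAux.xvec B with hxdef
  have hxpos : ∀ i, 0 < x i := fun i =>
    lt_of_lt_of_le one_pos (MTAux.one_le_xvec hn B i)
  have hkey := MTAux.wprod_le_xvec hn hB hcyc
  have hBx : ∀ i j, B i j * x j ≤ x i := by
    intro i j
    have hmem : x j ∈ (MTAux.wprod B j) '' { l : List (Fin n) | l.length < n } :=
      Set.Nonempty.csSup_mem (MTAux.xvec_set_nonempty hn B j) (MTAux.xvec_set_finite B j)
    obtain ⟨l, _, hwl⟩ := hmem
    calc B i j * x j = MTAux.wprod B i (j :: l) := by rw [← hwl, MTAux.wprod_cons]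
      _ ≤ x i := hkey (j :: l).length i (j :: l) rfl
  have hsup_le : (⨆ p : Fin n × Fin n, A p.1 p.2 * x p.2 / x p.1) ≤ lam := by
    refine ciSup_le fun p => ?_
    rw [div_le_iff₀ (hxpos p.1)]
    have h1 := hBx p.1 p.2
    have h2 : A p.1 p.2 * x p.2 = lam * (B p.1 p.2 * x p.2) := by
      simp only [hBdef, Matrix.of_apply]
      field_simp
    rw [h2, mul_comm lam (x p.1)]
    calc lam * (B p.1 p.2 * x p.2) ≤ lam * x p.1 :=
          mul_le_mul_of_nonneg_left h1 hlam.le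
      _ = x p.1 * lam := mul_comm _ _
  have hge : lam ≤ ⨆ p : Fin n × Fin n, A p.1 p.2 * x p.2 / x p.1 :=
    MTAux.specRad_le_sup hn A hA x hxpos
  constructor
  · exact ⟨x, hxpos, le_antisymm hge hsup_le⟩
  · rintro y ⟨x', hx', rfl⟩
    exact MTAux.specRad_le_sup hn A hA x' hx'

end
end

section
/- Let n ≥ 1 and let A be an n×n nonnegative real matrix whose max-times spectral radius λ = λ(A) is positive. A positive vector x ∈ ℝ_{>0}^n satisfies max_{i,j} A_{ij} x_j / x_i = λ (i.e., x attains the minimum of this objective over positive vectors) if and only if there exists a positive vector u ∈ ℝ_{>0}^n such that x = (λ^{-1}A)^* ⊗ u. -/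
open scoped BigOperators

noncomputable section

section MTHelpers
variable {n : ℕ}


lemma bdd {α : Type*} [Finite α] (f : α → ℝ) : BddAbove (Set.range f) := (Set.finite_range f).bddAbove

lemma mtPow_nonneg {B : Matrix (Fin n) (Fin n) ℝ} (hB : ∀ i j, 0 ≤ B i j) :
    ∀ k i j, 0 ≤ mtPow B k i j := by
  intro k
  induction k with
  | zero => intro i j; simp only [mtPow, Matrix.of_apply]; positivity
  | succ k ih =>
    intro i j
    have hne : Nonempty (Fin n) := ⟨i⟩
    calc (0:ℝ) ≤ mtPow B k i i * B i j := mul_nonneg (ih i i) (hB i j)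
    _ ≤ ⨆ l, mtPow B k i l * B l j := le_ciSup (bdd fun l => mtPow B k i l * B l j) i
    _ = _ := rfl

lemma mtPow_succ_apply (B : Matrix (Fin n) (Fin n) ℝ) (k : ℕ) (i j : Fin n) :
    mtPow B (k+1) i j = ⨆ l : Fin n, mtPow B k i l * B l j := rfl

-- Lemma F
lemma mtPow_mul_le {B : Matrix (Fin n) (Fin n) ℝ} (hB : ∀ i j, 0 ≤ B i j)
    {x : Fin n → ℝ} (hx : ∀ i, 0 ≤ x i) (hBx : ∀ i j, B i j * x j ≤ x i) :
    ∀ k i j, mtPow B k i j * x j ≤ x i := by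
  intro k
  induction k with
  | zero =>
    intro i j
    simp only [mtPow, Matrix.of_apply]
    by_cases h : i = j <;> simp [h, hx j, hx i]
  | succ k ih =>
    intro i j
    have hne : Nonempty (Fin n) := ⟨i⟩
    rw [mtPow_succ_apply, Real.iSup_mul_of_nonneg (hx j)]
    refine ciSup_le fun l => ?_
    calc mtPow B k i l * B l j * x j = mtPow B k i l * (B l j * x j) := by ring
    _ ≤ mtPow B k i l * x l := mul_le_mul_of_nonneg_left (hBx l j) (mtPow_nonneg hB k i l)
    _ ≤ x i := ih i l

-- Lemma G
lemma mul_mtPow_le {B : Matrix (Fin n) (Fin n) ℝ} (hB : ∀ i j, 0 ≤ B i j) :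
    ∀ (k : ℕ) (i j l : Fin n), B i j * mtPow B k j l ≤ mtPow B (k+1) i l := by
  intro k
  induction k with
  | zero =>
    intro i j l
    have hne : Nonempty (Fin n) := ⟨i⟩
    simp only [mtPow, Matrix.of_apply, mtMul]
    by_cases h : j = l
    · subst h
      calc B i j * (if j = j then (1:ℝ) else 0) = (if i = i then (1:ℝ) else 0) * B i j := by simp
      _ ≤ _ := le_ciSup (bdd fun m => (if i = m then (1:ℝ) else 0) * B m j) i
    · simp only [h, if_false, mul_zero]
      calc (0:ℝ) ≤ (if i = i then (1:ℝ) else 0) * B i l := by simp [hB]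
      _ ≤ _ := le_ciSup (bdd fun m => (if i = m then (1:ℝ) else 0) * B m l) i
  | succ k ih =>
    intro i j l
    have hne : Nonempty (Fin n) := ⟨i⟩
    rw [mtPow_succ_apply, Real.mul_iSup_of_nonneg (hB i j)]
    refine ciSup_le fun m => ?_
    calc B i j * (mtPow B k j m * B m l) = (B i j * mtPow B k j m) * B m l := by ring
    _ ≤ mtPow B (k+1) i m * B m l := mul_le_mul_of_nonneg_right (ih i j m) (hB m l)
    _ ≤ _ := le_ciSup (bdd fun m => mtPow B (k+1) i m * B m l) m

-- B1
lemma path_le_mtPow {B : Matrix (Fin n) (Fin n) ℝ} (hB : ∀ i j, 0 ≤ B i j) :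
    ∀ (m : ℕ) (g : ℕ → Fin n),
      (∏ t ∈ Finset.range m, B (g t) (g (t+1))) ≤ mtPow B m (g 0) (g m) := by
  intro m
  induction m with
  | zero => intro g; simp [mtPow]
  | succ m ih =>
    intro g
    have hne : Nonempty (Fin n) := ⟨g 0⟩
    rw [Finset.prod_range_succ, mtPow_succ_apply]
    calc (∏ t ∈ Finset.range m, B (g t) (g (t+1))) * B (g m) (g (m+1))
        ≤ mtPow B m (g 0) (g m) * B (g m) (g (m+1)) :=
          mul_le_mul_of_nonneg_right (ih g) (hB _ _)
    _ ≤ _ := le_ciSup (bdd fun l => mtPow B m (g 0) l * B l (g (m+1))) (g m)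

-- B2
lemma mtPow_le_path {B : Matrix (Fin n) (Fin n) ℝ} (hB : ∀ i j, 0 ≤ B i j) :
    ∀ (m : ℕ), 0 < m → ∀ i j : Fin n, ∃ g : ℕ → Fin n, g 0 = i ∧ g m = j ∧
      mtPow B m i j ≤ ∏ t ∈ Finset.range m, B (g t) (g (t+1)) := by
  intro m
  induction m with
  | zero => intro h; exact absurd h (lt_irrefl 0)
  | succ m ih =>
    intro _ i j
    have hne : Nonempty (Fin n) := ⟨i⟩
    rcases Nat.eq_zero_or_pos m with hm | hm
    · subst hm
      refine ⟨fun t => if t = 0 then i else j, by simp, by simp, ?_⟩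
      rw [mtPow_succ_apply]
      refine ciSup_le fun l => ?_
      simp only [mtPow, Matrix.of_apply]
      by_cases h : i = l
      · subst h; simp
      · simp [h, hB]
    · obtain ⟨l, hl⟩ := Finite.exists_max (fun l : Fin n => mtPow B m i l * B l j)
      obtain ⟨g, hg0, hgm, hgle⟩ := ih hm i l
      refine ⟨fun t => if t ≤ m then g t else j, by simp [hg0], by simp, ?_⟩
      have key : mtPow B (m+1) i j ≤ mtPow B m i l * B l j := by
        rw [mtPow_succ_apply]; exact ciSup_le hl
      have hprod : (∏ t ∈ Finset.range (m+1),
          B ((fun t => if t ≤ m then g t else j) t) ((fun t => if t ≤ m then g t else j) (t+1)))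
          = (∏ t ∈ Finset.range m, B (g t) (g (t+1))) * B l j := by
        rw [Finset.prod_range_succ]
        congr 1
        · refine Finset.prod_congr rfl fun t ht => ?_
          have ht' := Finset.mem_range.mp ht
          simp only []
          rw [if_pos (by omega), if_pos (by omega)]
        · simp only [le_refl, if_pos, if_neg (by omega : ¬ m + 1 ≤ m)]
          rw [hgm]
      rw [hprod]
      exact key.trans (mul_le_mul_of_nonneg_right hgle (hB l j))


lemma mtPow_n_le_mtStar (hn : 1 ≤ n) {B : Matrix (Fin n) (Fin n) ℝ}
    (hB : ∀ i j, 0 ≤ B i j)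
    (hcyc : ∀ (g : ℕ → Fin n) (a b : ℕ), a < b → b - a ≤ n → g a = g b →
      (∏ t ∈ Finset.Ico a b, B (g t) (g (t+1))) ≤ 1) (i j : Fin n) :
    mtPow B n i j ≤ mtStar B i j := by
  have hne : Nonempty (Fin n) := ⟨i⟩
  obtain ⟨g, hg0, hgn, hle⟩ := mtPow_le_path hB n hn i j
  obtain ⟨a, b, hab, hbn, hgab⟩ : ∃ a b : ℕ, a < b ∧ b ≤ n ∧ g a = g b := by
    obtain ⟨x, y, hxy, hfxy⟩ := Fintype.exists_ne_map_eq_of_card_lt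
      (fun t : Fin (n+1) => g t.val) (by simp)
    rcases hxy.lt_or_gt with h | h
    · exact ⟨x.val, y.val, h, Nat.lt_succ_iff.mp y.isLt, hfxy⟩
    · exact ⟨y.val, x.val, h, Nat.lt_succ_iff.mp x.isLt, hfxy.symm⟩
  set c := b - a with hc
  set m' := n - c with hm'
  have hcpos : 0 < c := by omega
  have hacb : a + c = b := by omega
  have ham' : a ≤ m' := by omega
  have hm'c : m' + c = n := by omega
  have hm'lt : m' < n := by omega
  set g' : ℕ → Fin n := fun t => if t ≤ a then g t else g (t + c) with hg'
  have key : ∀ t, a ≤ t → g' t = g (t + c) := by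
    intro t ht
    by_cases h : t ≤ a
    · have : t = a := le_antisymm h ht
      subst this
      simp only [hg', if_pos le_rfl]
      rw [hgab, ← hacb]
    · simp only [hg', if_neg h]
  have hg'0 : g' 0 = i := by
    simp only [hg', if_pos (Nat.zero_le a)]; exact hg0
  have hg'm : g' m' = j := by
    rw [key m' ham', hm'c]; exact hgn
  have splitg' : (∏ t ∈ Finset.range m', B (g' t) (g' (t+1)))
      = (∏ t ∈ Finset.range a, B (g t) (g (t+1)))
        * ∏ t ∈ Finset.Ico b n, B (g t) (g (t+1)) := by
    rw [← Finset.prod_range_mul_prod_Ico (fun t => B (g' t) (g' (t+1))) ham']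
    congr 1
    · refine Finset.prod_congr rfl fun t ht => ?_
      have ht' := Finset.mem_range.mp ht
      simp only [hg', if_pos (by omega : t ≤ a), if_pos (by omega : t + 1 ≤ a)]
    · rw [Finset.prod_Ico_eq_prod_range, Finset.prod_Ico_eq_prod_range]
      have hmb : m' - a = n - b := by omega
      rw [hmb]
      refine Finset.prod_congr rfl fun s hs => ?_
      rw [key (a + s) (Nat.le_add_right a s), key (a + s + 1) (by omega)]
      have e1 : a + s + c = b + s := by omega
      have e2 : a + s + 1 + c = b + s + 1 := by omega
      rw [e1, e2]
  have splitg : (∏ t ∈ Finset.range n, B (g t) (g (t+1)))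
      = (∏ t ∈ Finset.range a, B (g t) (g (t+1)))
        * ((∏ t ∈ Finset.Ico a b, B (g t) (g (t+1)))
          * ∏ t ∈ Finset.Ico b n, B (g t) (g (t+1))) := by
    rw [← Finset.prod_range_mul_prod_Ico (fun t => B (g t) (g (t+1))) (by omega : a ≤ n),
      ← Finset.prod_Ico_consecutive (fun t => B (g t) (g (t+1))) hab.le hbn]
  have hA1 : (0:ℝ) ≤ ∏ t ∈ Finset.range a, B (g t) (g (t+1)) :=
    Finset.prod_nonneg fun t _ => hB _ _
  have hA2 : (0:ℝ) ≤ ∏ t ∈ Finset.Ico b n, B (g t) (g (t+1)) :=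
    Finset.prod_nonneg fun t _ => hB _ _
  have hCy : (∏ t ∈ Finset.Ico a b, B (g t) (g (t+1))) ≤ 1 :=
    hcyc g a b hab (by omega) hgab
  calc mtPow B n i j ≤ ∏ t ∈ Finset.range n, B (g t) (g (t+1)) := hle
  _ = _ := splitg
  _ ≤ (∏ t ∈ Finset.range a, B (g t) (g (t+1)))
        * (1 * ∏ t ∈ Finset.Ico b n, B (g t) (g (t+1))) := by
      refine mul_le_mul_of_nonneg_left ?_ hA1
      exact mul_le_mul_of_nonneg_right hCy hA2
  _ = ∏ t ∈ Finset.range m', B (g' t) (g' (t+1)) := by rw [one_mul, splitg']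
  _ ≤ mtPow B m' (g' 0) (g' m') := path_le_mtPow hB m' g'
  _ = mtPow B m' i j := by rw [hg'0, hg'm]
  _ ≤ _ := by
      have := le_ciSup (bdd fun k : Fin n => mtPow B (k : ℕ) i j) ⟨m', hm'lt⟩
      exact this

lemma cyc_succ {k : ℕ} [NeZero k] (t : Fin k) :
    (⟨((t : ℕ) + 1) % k, Nat.mod_lt _ (Nat.pos_of_ne_zero (NeZero.ne k))⟩ : Fin k) = t + 1 := by
  ext
  simp [Fin.add_def, Nat.add_mod, Nat.mod_mod_of_dvd, Nat.mod_self]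

-- cycle product rewritten with ratios
lemma cycle_prod_eq_ratio (A : Matrix (Fin n) (Fin n) ℝ) {x : Fin n → ℝ}
    (hx : ∀ i, 0 < x i) {k : ℕ} (hk : 0 < k) (f : Fin k → Fin n) :
    (∏ t : Fin k, A (f t) (f ⟨((t : ℕ) + 1) % k, Nat.mod_lt _ hk⟩))
      = ∏ t : Fin k, (A (f t) (f ⟨((t : ℕ) + 1) % k, Nat.mod_lt _ hk⟩)
          * x (f ⟨((t : ℕ) + 1) % k, Nat.mod_lt _ hk⟩) / x (f t)) := by
  haveI : NeZero k := ⟨hk.ne'⟩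
  have hfix : ∀ t : Fin k, (⟨((t : ℕ) + 1) % k, Nat.mod_lt _ hk⟩ : Fin k) = t + 1 :=
    fun t => cyc_succ t
  simp only [hfix]
  rw [Finset.prod_div_distrib, Finset.prod_mul_distrib]
  have hperm : (∏ t : Fin k, x (f (t + 1))) = ∏ t : Fin k, x (f t) :=
    Equiv.prod_comp (Equiv.addRight (1 : Fin k)) (fun t => x (f t))
  rw [hperm, mul_div_assoc,
    div_self (Finset.prod_pos (fun t _ => hx (f t))).ne', mul_one]

-- every element of the spectral radius set is at most the max ratio
lemma specRad_elem_le (A : Matrix (Fin n) (Fin n) ℝ) (hA : ∀ i j, 0 ≤ A i j)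
    (hn : 1 ≤ n) {x : Fin n → ℝ} (hx : ∀ i, 0 < x i) :
    ∀ r ∈ { r : ℝ | ∃ (k : ℕ) (hk : 0 < k), k ≤ n ∧ ∃ f : Fin k → Fin n,
      r = (∏ t : Fin k, A (f t) (f ⟨((t : ℕ) + 1) % k, Nat.mod_lt _ hk⟩)) ^ ((k : ℝ)⁻¹) },
      r ≤ ⨆ p : Fin n × Fin n, A p.1 p.2 * x p.2 / x p.1 := by
  have hne : Nonempty (Fin n) := Fin.pos_iff_nonempty.mp hn
  set M := ⨆ p : Fin n × Fin n, A p.1 p.2 * x p.2 / x p.1 with hM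
  have hM0 : 0 ≤ M := by
    obtain ⟨i⟩ := hne
    calc (0:ℝ) ≤ A i i * x i / x i := div_nonneg (mul_nonneg (hA i i) (hx i).le) (hx i).le
    _ ≤ M := le_ciSup (bdd fun p : Fin n × Fin n => A p.1 p.2 * x p.2 / x p.1) (i, i)
  rintro r ⟨k, hk, hkn, f, rfl⟩
  have hprod0 : (0:ℝ) ≤ ∏ t : Fin k, A (f t) (f ⟨((t : ℕ) + 1) % k, Nat.mod_lt _ hk⟩) :=
    Finset.prod_nonneg fun t _ => hA _ _
  have hple : (∏ t : Fin k, A (f t) (f ⟨((t : ℕ) + 1) % k, Nat.mod_lt _ hk⟩)) ≤ M ^ k := by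
    rw [cycle_prod_eq_ratio A hx hk f]
    calc _ ≤ ∏ _t : Fin k, M := by
          refine Finset.prod_le_prod (fun t _ => div_nonneg (mul_nonneg (hA _ _) (hx _).le) (hx _).le) (fun t _ => ?_)
          exact le_ciSup (bdd fun p : Fin n × Fin n => A p.1 p.2 * x p.2 / x p.1)
            (f t, f ⟨((t : ℕ) + 1) % k, Nat.mod_lt _ hk⟩)
    _ = M ^ k := by rw [Finset.prod_const, Finset.card_univ, Fintype.card_fin]
  calc _ ≤ ((M:ℝ) ^ k) ^ ((k:ℝ)⁻¹) :=
        Real.rpow_le_rpow hprod0 hple (by positivity)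
  _ = M := by
      rw [← Real.rpow_natCast M k, ← Real.rpow_mul hM0,
        mul_inv_cancel₀ (by exact_mod_cast hk.ne' : (k:ℝ) ≠ 0), Real.rpow_one]

lemma specRad_set_bddAbove (A : Matrix (Fin n) (Fin n) ℝ) (hA : ∀ i j, 0 ≤ A i j)
    (hn : 1 ≤ n) :
    BddAbove { r : ℝ | ∃ (k : ℕ) (hk : 0 < k), k ≤ n ∧ ∃ f : Fin k → Fin n,
      r = (∏ t : Fin k, A (f t) (f ⟨((t : ℕ) + 1) % k, Nat.mod_lt _ hk⟩)) ^ ((k : ℝ)⁻¹) } :=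
  ⟨_, fun r hr => specRad_elem_le A hA hn (x := fun _ => 1) (fun _ => one_pos) r hr⟩

lemma specRad_le_ratio (A : Matrix (Fin n) (Fin n) ℝ) (hA : ∀ i j, 0 ≤ A i j)
    (hn : 1 ≤ n) {x : Fin n → ℝ} (hx : ∀ i, 0 < x i) :
    mtSpecRad A ≤ ⨆ p : Fin n × Fin n, A p.1 p.2 * x p.2 / x p.1 := by
  have hne : Nonempty (Fin n) := Fin.pos_iff_nonempty.mp hn
  refine Real.sSup_le (specRad_elem_le A hA hn hx) ?_
  obtain ⟨i⟩ := hne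
  calc (0:ℝ) ≤ A i i * x i / x i := div_nonneg (mul_nonneg (hA i i) (hx i).le) (hx i).le
  _ ≤ _ := le_ciSup (bdd fun p : Fin n × Fin n => A p.1 p.2 * x p.2 / x p.1) (i, i)

-- cycle products of A are at most lam^k
lemma cycle_prod_le_pow (A : Matrix (Fin n) (Fin n) ℝ) (hA : ∀ i j, 0 ≤ A i j)
    (hn : 1 ≤ n) {lam : ℝ} (hlam : lam = mtSpecRad A) (hpos : 0 < lam)
    {k : ℕ} (hk : 0 < k) (hkn : k ≤ n) (f : Fin k → Fin n) :
    (∏ t : Fin k, A (f t) (f ⟨((t : ℕ) + 1) % k, Nat.mod_lt _ hk⟩)) ≤ lam ^ k := by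
  set P := ∏ t : Fin k, A (f t) (f ⟨((t : ℕ) + 1) % k, Nat.mod_lt _ hk⟩) with hP
  have hP0 : (0:ℝ) ≤ P := Finset.prod_nonneg fun t _ => hA _ _
  have hr : P ^ ((k:ℝ)⁻¹) ≤ lam := by
    rw [hlam, mtSpecRad]
    exact le_csSup (specRad_set_bddAbove A hA hn) ⟨k, hk, hkn, f, rfl⟩
  have hkne : (k:ℝ) ≠ 0 := by exact_mod_cast hk.ne'
  calc P = (P ^ ((k:ℝ)⁻¹)) ^ k := by
        rw [← Real.rpow_natCast (P ^ ((k:ℝ)⁻¹)) k, ← Real.rpow_mul hP0,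
          inv_mul_cancel₀ hkne, Real.rpow_one]
  _ ≤ lam ^ k := pow_le_pow_left₀ (Real.rpow_nonneg hP0 _) hr k

-- converting a cyclic Fin-indexed product to an interval product
lemma cycle_Ico_eq {n : ℕ} (C : Matrix (Fin n) (Fin n) ℝ) {k : ℕ} (hk : 0 < k)
    (g : ℕ → Fin n) (a : ℕ) (hgak : g a = g (a + k)) :
    (∏ t : Fin k, C (g (a + (t : ℕ))) (g (a + ((t : ℕ) + 1) % k)))
      = ∏ t ∈ Finset.Ico a (a + k), C (g t) (g (t + 1)) := by
  rw [Finset.prod_Ico_eq_prod_range]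
  have hsub : a + k - a = k := by omega
  rw [hsub, Finset.prod_range]
  refine Finset.prod_congr rfl fun t _ => ?_
  congr 1
  rcases Nat.lt_or_ge ((t : ℕ) + 1) k with h | h
  · rw [Nat.mod_eq_of_lt h, ← Nat.add_assoc]
  · have h' : (t : ℕ) + 1 = k := by omega
    rw [h', Nat.mod_self, Nat.add_zero, show a + (t : ℕ) + 1 = a + k by omega]
    exact hgak

end MTHelpers

/-- A positive vector `x` attains the minimum value `λ(A)` of the
objective `max_{i,j} A_{ij} x_j / x_i` iff `x = (λ⁻¹ A)^* ⊗ u` for some positive `u`. -/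
theorem mt_unconstrained_minimizers {n : ℕ} (hn : 1 ≤ n) (A : Matrix (Fin n) (Fin n) ℝ)
    (hA : ∀ i j, 0 ≤ A i j) (lam : ℝ) (hlam : lam = mtSpecRad A) (hpos : 0 < lam)
    (x : Fin n → ℝ) (hx : ∀ i, 0 < x i) :
    (⨆ p : Fin n × Fin n, A p.1 p.2 * x p.2 / x p.1) = lam ↔
      ∃ u : Fin n → ℝ, (∀ i, 0 < u i) ∧ x = mtVecMul (mtStar (lam⁻¹ • A)) u := by
  have hne : Nonempty (Fin n) := Fin.pos_iff_nonempty.mp hn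
  set B := lam⁻¹ • A with hBdef
  have hBapp : ∀ i j, B i j = lam⁻¹ * A i j := fun i j => by
    simp [hBdef, Matrix.smul_apply, smul_eq_mul]
  have hBnn : ∀ i j, 0 ≤ B i j := fun i j => by
    rw [hBapp]; exact mul_nonneg (inv_nonneg.mpr hpos.le) (hA i j)
  have hcycB : ∀ (g : ℕ → Fin n) (a b : ℕ), a < b → b - a ≤ n → g a = g b →
      (∏ t ∈ Finset.Ico a b, B (g t) (g (t + 1))) ≤ 1 := by
    intro g a b hab hban hgab
    set k := b - a with hkdef
    have hk0 : 0 < k := by omega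
    have hb : b = a + k := by omega
    have hgak : g a = g (a + k) := hb ▸ hgab
    have hA' : (∏ t : Fin k, A (g (a + (t : ℕ))) (g (a + ((t : ℕ) + 1) % k))) ≤ lam ^ k :=
      cycle_prod_le_pow A hA hn hlam hpos hk0 (by omega) (fun t => g (a + (t : ℕ)))
    have hIA := cycle_Ico_eq A hk0 g a hgak
    calc (∏ t ∈ Finset.Ico a b, B (g t) (g (t + 1)))
        = ∏ t ∈ Finset.Ico a b, lam⁻¹ * A (g t) (g (t + 1)) :=
          Finset.prod_congr rfl fun t _ => hBapp _ _
    _ = lam⁻¹ ^ k * ∏ t ∈ Finset.Ico a b, A (g t) (g (t + 1)) := by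
        rw [Finset.prod_mul_distrib, Finset.prod_const, Nat.card_Ico]
    _ ≤ lam⁻¹ ^ k * lam ^ k := by
        refine mul_le_mul_of_nonneg_left ?_ (by positivity)
        rw [hb, ← hIA]; exact hA'
    _ = 1 := by rw [← mul_pow, inv_mul_cancel₀ hpos.ne', one_pow]
  constructor
  · intro hsup
    refine ⟨x, hx, ?_⟩
    have hBx : ∀ i j, B i j * x j ≤ x i := by
      intro i j
      have h1 : A i j * x j / x i ≤ lam := by
        rw [← hsup]
        exact le_ciSup (bdd fun p : Fin n × Fin n => A p.1 p.2 * x p.2 / x p.1) (i, j)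
      have h2 : A i j * x j ≤ lam * x i := (div_le_iff₀ (hx i)).mp h1
      rw [hBapp]
      calc lam⁻¹ * A i j * x j = lam⁻¹ * (A i j * x j) := by ring
      _ ≤ lam⁻¹ * (lam * x i) := mul_le_mul_of_nonneg_left h2 (inv_nonneg.mpr hpos.le)
      _ = x i := by field_simp
    funext i
    refine le_antisymm ?_ ?_
    · have h1' : (1 : ℝ) ≤ ⨆ k : Fin n, mtPow B (k : ℕ) i i := by
        have := le_ciSup (bdd fun k : Fin n => mtPow B (k : ℕ) i i) (⟨0, hn⟩ : Fin n)
        simpa [mtPow] using this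
      calc x i = 1 * x i := (one_mul _).symm
      _ ≤ (⨆ k : Fin n, mtPow B (k : ℕ) i i) * x i :=
          mul_le_mul_of_nonneg_right h1' (hx i).le
      _ = mtStar B i i * x i := rfl
      _ ≤ ⨆ j, mtStar B i j * x j := le_ciSup (bdd fun j => mtStar B i j * x j) i
      _ = mtVecMul (mtStar B) x i := rfl
    · refine ciSup_le fun j => ?_
      show mtStar B i j * x j ≤ x i
      rw [show mtStar B i j = ⨆ k : Fin n, mtPow B (k : ℕ) i j from rfl,
        Real.iSup_mul_of_nonneg (hx j).le]
      exact ciSup_le fun k => mtPow_mul_le hBnn (fun i => (hx i).le) hBx _ i j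
  · rintro ⟨u, hu, hxu⟩
    have hBx : ∀ i j, B i j * x j ≤ x i := by
      intro i j
      rw [hxu]
      show B i j * (⨆ l, mtStar B j l * u l) ≤ ⨆ l, mtStar B i l * u l
      rw [Real.mul_iSup_of_nonneg (hBnn i j)]
      refine ciSup_le fun l => ?_
      rw [show mtStar B j l = ⨆ k : Fin n, mtPow B (k : ℕ) j l from rfl,
        Real.iSup_mul_of_nonneg (hu l).le, Real.mul_iSup_of_nonneg (hBnn i j)]
      refine ciSup_le fun k => ?_
      have h3 : B i j * mtPow B (k : ℕ) j l ≤ mtPow B ((k : ℕ) + 1) i l :=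
        mul_mtPow_le hBnn (k : ℕ) i j l
      have h4 : mtPow B ((k : ℕ) + 1) i l ≤ mtStar B i l := by
        rcases Nat.lt_or_ge ((k : ℕ) + 1) n with h | h
        · exact le_ciSup (bdd fun m : Fin n => mtPow B (m : ℕ) i l) (⟨(k : ℕ) + 1, h⟩ : Fin n)
        · have h' : (k : ℕ) + 1 = n := by omega
          rw [h']; exact mtPow_n_le_mtStar hn hBnn hcycB i l
      calc B i j * (mtPow B (k : ℕ) j l * u l)
          = (B i j * mtPow B (k : ℕ) j l) * u l := by ring
      _ ≤ mtStar B i l * u l := mul_le_mul_of_nonneg_right (h3.trans h4) (hu l).le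
      _ ≤ ⨆ l, mtStar B i l * u l := le_ciSup (bdd fun l => mtStar B i l * u l) l
    refine le_antisymm ?_ ?_
    · refine ciSup_le fun p => ?_
      rw [div_le_iff₀ (hx p.1)]
      have h5 := hBx p.1 p.2
      rw [hBapp] at h5
      calc A p.1 p.2 * x p.2 = lam * (lam⁻¹ * A p.1 p.2 * x p.2) := by field_simp
      _ ≤ lam * x p.1 := mul_le_mul_of_nonneg_left h5 hpos.le
    · rw [hlam]; exact specRad_le_ratio A hA hn hx

end
end

section
/- Let n ≥ 1 and let A be an n×n real matrix. Then the minimum over all vectors x ∈ ℝ^n of max_{i,j} (A_{ij} + x_j − x_i) equals the maximum cycle mean λ(A) = max_{1≤k≤n} max_{i_1,…,i_k} (A_{i_1 i_2} + A_{i_2 i_3} + ⋯ + A_{i_k i_1})/k, and the minimum is attained. -/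
open scoped BigOperators

noncomputable section

section MpAux

def mpG {n : ℕ} (A : Matrix (Fin n) (Fin n) ℝ) (x : Fin n → ℝ) : ℝ :=
  ⨆ p : Fin n × Fin n, A p.1 p.2 + x p.2 - x p.1

private lemma fin_rot_sum {k : ℕ} (hk : 0 < k) (x : Fin k → ℝ) :
    ∑ t : Fin k, x ⟨((t : ℕ) + 1) % k, Nat.mod_lt _ hk⟩ = ∑ t : Fin k, x t := by
  obtain ⟨k, rfl⟩ : ∃ k', k = k' + 1 := ⟨k - 1, by omega⟩
  rw [← Equiv.sum_comp (finRotate (k + 1)) x]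
  refine Finset.sum_congr rfl fun t _ => ?_
  congr 1
  rw [finRotate_succ_apply]
  ext
  simp [Fin.add_def, Nat.add_mod_mod]

private lemma mpG_le_bdd {n : ℕ} (A : Matrix (Fin n) (Fin n) ℝ) (x : Fin n → ℝ) :
    BddAbove (Set.range fun p : Fin n × Fin n => A p.1 p.2 + x p.2 - x p.1) :=
  (Set.finite_range _).bddAbove

private lemma le_mpG {n : ℕ} (A : Matrix (Fin n) (Fin n) ℝ) (x : Fin n → ℝ)
    (p : Fin n × Fin n) : A p.1 p.2 + x p.2 - x p.1 ≤ mpG A x :=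
  le_ciSup (mpG_le_bdd A x) p

private lemma mpG_le {n : ℕ} [Nonempty (Fin n)] (A : Matrix (Fin n) (Fin n) ℝ)
    (x : Fin n → ℝ) (B : ℝ) (h : ∀ p : Fin n × Fin n, A p.1 p.2 + x p.2 - x p.1 ≤ B) :
    mpG A x ≤ B := ciSup_le h

/-- Any cycle mean is at most `mpG A x` for every potential `x`. -/
private lemma cyc_le_mpG {n : ℕ} (hn : 1 ≤ n) (A : Matrix (Fin n) (Fin n) ℝ)
    (x : Fin n → ℝ) {r : ℝ}
    (hr : r ∈ { r : ℝ | ∃ (k : ℕ) (hk : 0 < k), k ≤ n ∧ ∃ f : Fin k → Fin n,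
      r = (∑ t : Fin k, A (f t) (f ⟨((t : ℕ) + 1) % k, Nat.mod_lt _ hk⟩)) / (k : ℝ) }) :
    r ≤ mpG A x := by
  obtain ⟨k, hk, hkn, f, rfl⟩ := hr
  have hrot : ∑ t : Fin k, x (f ⟨((t : ℕ) + 1) % k, Nat.mod_lt _ hk⟩)
      = ∑ t : Fin k, x (f t) := fin_rot_sum hk (fun t => x (f t))
  have hsum : ∑ t : Fin k, A (f t) (f ⟨((t : ℕ) + 1) % k, Nat.mod_lt _ hk⟩)
      ≤ (k : ℝ) * mpG A x := by
    calc ∑ t : Fin k, A (f t) (f ⟨((t : ℕ) + 1) % k, Nat.mod_lt _ hk⟩)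
        = ∑ t : Fin k, (A (f t) (f ⟨((t : ℕ) + 1) % k, Nat.mod_lt _ hk⟩)
            + x (f ⟨((t : ℕ) + 1) % k, Nat.mod_lt _ hk⟩) - x (f t)) := by
          rw [Finset.sum_sub_distrib, Finset.sum_add_distrib, hrot]; ring
      _ ≤ ∑ _t : Fin k, mpG A x :=
          Finset.sum_le_sum fun t _ => le_mpG A x (f t, f ⟨((t : ℕ) + 1) % k, Nat.mod_lt _ hk⟩)
      _ = (k : ℝ) * mpG A x := by simp [Finset.sum_const, mul_comm]
  have hk' : (0 : ℝ) < (k : ℝ) := by exact_mod_cast hk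
  rw [div_le_iff₀ hk']
  linarith [hsum]


private lemma exists_walk {n : ℕ} {r : Fin n → Fin n → Prop} {i j : Fin n}
    (h : Relation.TransGen r i j) :
    ∃ m : ℕ, 0 < m ∧ ∃ w : Fin (m + 1) → Fin n, w 0 = i ∧ w (Fin.last m) = j ∧
      ∀ t : Fin m, r (w t.castSucc) (w t.succ) := by
  induction h with
  | single hij =>
      exact ⟨1, one_pos, ![i, _], rfl, rfl, fun t => by fin_cases t; simpa using hij⟩
  | @tail b c hab hbc ih =>
      obtain ⟨m, hm, w, hw0, hwl, hwr⟩ := ih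
      refine ⟨m + 1, by omega, Fin.snoc w c, ?_, ?_, ?_⟩
      · rw [show (0 : Fin (m + 1 + 1)) = Fin.castSucc 0 by simp, Fin.snoc_castSucc]
        exact hw0
      · simp
      · intro t
        refine Fin.lastCases ?_ ?_ t
        · rw [Fin.succ_last, Fin.snoc_last, Fin.snoc_castSucc, hwl]; exact hbc
        · intro s
          rw [Fin.succ_castSucc, Fin.snoc_castSucc, Fin.snoc_castSucc]
          exact hwr s

private lemma shrink_cycle {n : ℕ} {r : Fin n → Fin n → Prop} :
    ∀ m : ℕ, ∀ _hm : 0 < m, ∀ f : Fin m → Fin n,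
      (∀ t : Fin m, r (f t) (f ⟨((t : ℕ) + 1) % m, Nat.mod_lt _ _hm⟩)) →
      ∃ k : ℕ, ∃ hk : 0 < k, k ≤ n ∧ ∃ g : Fin k → Fin n,
        ∀ t : Fin k, r (g t) (g ⟨((t : ℕ) + 1) % k, Nat.mod_lt _ hk⟩) := by
  intro m
  induction m using Nat.strong_induction_on with
  | _ m ih =>
    intro hm f hf
    by_cases hmn : m ≤ n
    · exact ⟨m, hm, hmn, f, hf⟩
    · push_neg at hmn
      have hcard : Fintype.card (Fin n) < Fintype.card (Fin m) := by simpa using hmn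
      obtain ⟨a, b, hlt, hfab⟩ : ∃ a b : Fin m, (a : ℕ) < (b : ℕ) ∧ f a = f b := by
        obtain ⟨a, b, hab, hfab⟩ := Fintype.exists_ne_map_eq_of_card_lt f hcard
        rcases lt_or_gt_of_ne (fun h : (a : ℕ) = (b : ℕ) => hab (Fin.ext h)) with h | h
        · exact ⟨a, b, h, hfab⟩
        · exact ⟨b, a, h, hfab.symm⟩
      have hb := b.isLt
      set k := (b : ℕ) - (a : ℕ) with hkdef
      have hk0 : 0 < k := by omega
      have hklt : k < m := by omega
      refine ih k hklt hk0 (fun s => f ⟨(a : ℕ) + (s : ℕ), by have := s.isLt; omega⟩) ?_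
      intro s
      have hs := s.isLt
      have harc := hf ⟨(a : ℕ) + (s : ℕ), by omega⟩
      simp only [] at harc ⊢
      by_cases hcase : (s : ℕ) + 1 < k
      · have h2 : (((s : ℕ) + 1) % k) = (s : ℕ) + 1 := Nat.mod_eq_of_lt hcase
        have h1 : ((a : ℕ) + (s : ℕ) + 1) % m = (a : ℕ) + (s : ℕ) + 1 :=
          Nat.mod_eq_of_lt (by omega)
        have heq : (⟨(a : ℕ) + (((s : ℕ) + 1) % k), by have : ((s:ℕ)+1) % k < k := Nat.mod_lt _ hk0; omega⟩ : Fin m)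
            = ⟨((a : ℕ) + (s : ℕ) + 1) % m, Nat.mod_lt _ (by omega)⟩ := by
          ext; simp only [h1, h2]; omega
        rw [heq]
        exact harc
      · have hse : (s : ℕ) + 1 = k := by omega
        have h2 : (((s : ℕ) + 1) % k) = 0 := by rw [hse]; exact Nat.mod_self _
        have h1 : ((a : ℕ) + (s : ℕ) + 1) % m = (b : ℕ) := by
          rw [show (a : ℕ) + (s : ℕ) + 1 = (b : ℕ) by omega]
          exact Nat.mod_eq_of_lt hb
        have heq : f (⟨(a : ℕ) + (((s : ℕ) + 1) % k), by have : ((s:ℕ)+1) % k < k := Nat.mod_lt _ hk0; omega⟩ : Fin m)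
            = f ⟨((a : ℕ) + (s : ℕ) + 1) % m, Nat.mod_lt _ (by omega)⟩ := by
          rw [show (⟨(a : ℕ) + (((s : ℕ) + 1) % k), _⟩ : Fin m) = a by ext; simp [h2]]
          rw [show (⟨((a : ℕ) + (s : ℕ) + 1) % m, _⟩ : Fin m) = b by ext; simp [h1]]
          exact hfab
        rw [heq]
        exact harc

private lemma exists_cycle_le {n : ℕ} {r : Fin n → Fin n → Prop} {i : Fin n}
    (h : Relation.TransGen r i i) :
    ∃ k : ℕ, ∃ hk : 0 < k, k ≤ n ∧ ∃ g : Fin k → Fin n,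
      ∀ t : Fin k, r (g t) (g ⟨((t : ℕ) + 1) % k, Nat.mod_lt _ hk⟩) := by
  obtain ⟨m, hm, w, hw0, hwl, hwr⟩ := exists_walk h
  refine shrink_cycle m hm (fun t => w t.castSucc) ?_
  intro t
  by_cases hc : (t : ℕ) + 1 < m
  · have h1 : ((t : ℕ) + 1) % m = (t : ℕ) + 1 := Nat.mod_eq_of_lt hc
    have heq : (Fin.castSucc (⟨((t : ℕ) + 1) % m, Nat.mod_lt _ hm⟩ : Fin m)) = t.succ := by
      ext; simp [h1]
    show r (w t.castSucc) (w (Fin.castSucc (⟨((t : ℕ) + 1) % m, Nat.mod_lt _ hm⟩ : Fin m)))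
    rw [heq]
    exact hwr t
  · have hte : (t : ℕ) + 1 = m := by have := t.isLt; omega
    have h1 : ((t : ℕ) + 1) % m = 0 := by rw [hte]; exact Nat.mod_self _
    have heq : w (Fin.castSucc (⟨((t : ℕ) + 1) % m, Nat.mod_lt _ hm⟩ : Fin m)) = w t.succ := by
      rw [show (Fin.castSucc (⟨((t : ℕ) + 1) % m, Nat.mod_lt _ hm⟩ : Fin m)) = 0 by ext; simp [h1]]
      rw [show t.succ = Fin.last m by ext; simp [hte]]
      rw [hw0, hwl]
    show r (w t.castSucc) (w (Fin.castSucc (⟨((t : ℕ) + 1) % m, Nat.mod_lt _ hm⟩ : Fin m)))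
    rw [heq]
    exact hwr t


private lemma cont_sup' {α : Type*} [TopologicalSpace α] {ι : Type*} (f : ι → α → ℝ)
    (hf : ∀ i, Continuous (f i)) :
    ∀ (s : Finset ι) (hs : s.Nonempty), Continuous fun x => s.sup' hs fun i => f i x := by
  intro s hs
  induction hs using Finset.Nonempty.cons_induction with
  | singleton a => simpa using hf a
  | cons a s ha hs ih =>
      simp only [Finset.sup'_cons hs]
      exact (hf a).max ih

private lemma mpG_continuous {n : ℕ} (hn : 1 ≤ n) (A : Matrix (Fin n) (Fin n) ℝ) :
    Continuous (mpG A) := by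
  haveI : Nonempty (Fin n) := ⟨⟨0, hn⟩⟩
  have hne : (Finset.univ : Finset (Fin n × Fin n)).Nonempty := Finset.univ_nonempty
  have heq : mpG A = fun x =>
      (Finset.univ.sup' hne fun p : Fin n × Fin n => A p.1 p.2 + x p.2 - x p.1) := by
    funext x
    refine le_antisymm (ciSup_le fun p => ?_) (Finset.sup'_le _ _ fun p _ => le_mpG A x p)
    exact Finset.le_sup' (f := fun p : Fin n × Fin n => A p.1 p.2 + x p.2 - x p.1)
      (Finset.mem_univ p)
  rw [heq]
  exact cont_sup' (fun p : Fin n × Fin n => fun x : Fin n → ℝ => A p.1 p.2 + x p.2 - x p.1)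
    (fun p => (continuous_const.add (continuous_apply _)).sub (continuous_apply _)) _ _

private lemma mpG_exists_min {n : ℕ} (hn : 1 ≤ n) (A : Matrix (Fin n) (Fin n) ℝ) :
    ∃ x0 : Fin n → ℝ, ∀ x : Fin n → ℝ, mpG A x0 ≤ mpG A x := by
  haveI : Nonempty (Fin n) := ⟨⟨0, hn⟩⟩
  set i0 : Fin n := ⟨0, hn⟩
  set c : ℝ := mpG A 0 with hc
  have hne : (Finset.univ : Finset (Fin n × Fin n)).Nonempty := Finset.univ_nonempty
  set mA : ℝ := Finset.univ.inf' hne fun p : Fin n × Fin n => A p.1 p.2 with hmA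
  have hmAle : ∀ p : Fin n × Fin n, mA ≤ A p.1 p.2 := fun p =>
    Finset.inf'_le _ (Finset.mem_univ p)
  set R : ℝ := c - mA + 1 with hR
  have hcA : mA ≤ c := by
    have h := le_mpG A 0 (i0, i0)
    simp only [Pi.zero_apply, add_zero, sub_zero] at h
    exact le_trans (hmAle (i0, i0)) h
  have hR1 : 1 ≤ R := by rw [hR]; linarith
  set K : Set (Fin n → ℝ) :=
    (Set.univ.pi fun _ : Fin n => Set.Icc (-R) R) ∩ {x | x i0 = 0} with hK
  have hKc : IsCompact K := by
    refine IsCompact.of_isClosed_subset (isCompact_univ_pi fun _ => isCompact_Icc)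
      ?_ Set.inter_subset_left
    exact (isClosed_set_pi fun i _ => isClosed_Icc).inter
      (isClosed_eq (continuous_apply i0) continuous_const)
  have h0K : (0 : Fin n → ℝ) ∈ K := by
    refine ⟨fun i _ => ?_, rfl⟩
    simp only [Pi.zero_apply, Set.mem_Icc]
    constructor <;> linarith
  obtain ⟨x0, hx0K, hx0min⟩ := hKc.exists_isMinOn ⟨0, h0K⟩ ((mpG_continuous hn A).continuousOn)
  refine ⟨x0, fun x => ?_⟩
  set x' : Fin n → ℝ := fun i => x i - x i0 with hx'
  have hGx' : mpG A x' = mpG A x := by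
    unfold mpG
    exact iSup_congr fun p => by simp [hx']; ring
  have hx'i0 : x' i0 = 0 := by simp [hx']
  by_cases hb : ∀ i, |x' i| ≤ R
  · have hx'K : x' ∈ K := by
      refine ⟨fun i _ => ?_, hx'i0⟩
      have := hb i
      rw [abs_le] at this
      exact this
    have := isMinOn_iff.mp hx0min x' hx'K
    linarith [hGx']
  · push_neg at hb
    obtain ⟨i, hi⟩ := hb
    have hp1 : A i0 i + x' i - x' i0 ≤ mpG A x' := le_mpG A x' (i0, i)
    have hp2 : A i i0 + x' i0 - x' i ≤ mpG A x' := le_mpG A x' (i, i0)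
    have hm1 : mA ≤ A i0 i := hmAle (i0, i)
    have hm2 : mA ≤ A i i0 := hmAle (i, i0)
    have h1 : mA + x' i ≤ mpG A x' := by rw [hx'i0] at hp1; linarith
    have h2 : mA - x' i ≤ mpG A x' := by rw [hx'i0] at hp2; linarith
    have habs : mA + |x' i| ≤ mpG A x' := by
      rcases abs_cases (x' i) with ⟨h, _⟩ | ⟨h, _⟩ <;> rw [h] <;> [exact h1; exact h2]
    have hx0c : mpG A x0 ≤ c := isMinOn_iff.mp hx0min 0 h0K
    have : c < mpG A x' := by
      have : mA + R < mpG A x' := lt_of_lt_of_le (by linarith) habs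
      linarith [hR]
    linarith [hGx']

end MpAux

/-- The minimum over `x ∈ ℝⁿ` of `max_{i,j} (A_{ij} + x_j − x_i)`
equals the maximum cycle mean `λ(A)`, and it is attained. -/
theorem mp_unconstrained_min {n : ℕ} (hn : 1 ≤ n) (A : Matrix (Fin n) (Fin n) ℝ) :
    IsLeast { y : ℝ | ∃ x : Fin n → ℝ,
        y = ⨆ p : Fin n × Fin n, A p.1 p.2 + x p.2 - x p.1 }
      (mpCycleMean A) := by
  classical
  haveI : Nonempty (Fin n) := ⟨⟨0, hn⟩⟩
  set i0 : Fin n := ⟨0, hn⟩ with hi0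
  have hSne : { r : ℝ | ∃ (k : ℕ) (hk : 0 < k), k ≤ n ∧ ∃ f : Fin k → Fin n,
      r = (∑ t : Fin k, A (f t) (f ⟨((t : ℕ) + 1) % k, Nat.mod_lt _ hk⟩)) / (k : ℝ) }.Nonempty :=
    ⟨_, ⟨1, one_pos, hn, fun _ => i0, rfl⟩⟩
  have hlow : ∀ x : Fin n → ℝ, mpCycleMean A ≤ mpG A x := fun x =>
    csSup_le hSne fun r hr => cyc_le_mpG hn A x hr
  have hbdd : BddAbove { r : ℝ | ∃ (k : ℕ) (hk : 0 < k), k ≤ n ∧ ∃ f : Fin k → Fin n,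
      r = (∑ t : Fin k, A (f t) (f ⟨((t : ℕ) + 1) % k, Nat.mod_lt _ hk⟩)) / (k : ℝ) } :=
    ⟨mpG A 0, fun r hr => cyc_le_mpG hn A 0 hr⟩
  obtain ⟨x0, hx0⟩ := mpG_exists_min hn A
  set T : ℝ := mpG A x0 with hT
  have hTlam : mpCycleMean A ≤ T := hlow x0
  -- the tight relation
  set rel : Fin n → Fin n → Prop := fun i j => A i j + x0 j - x0 i = T with hrel
  have hTle : T ≤ mpCycleMean A := by
    by_cases hcyc : ∃ i : Fin n, Relation.TransGen rel i i
    · obtain ⟨i, hi⟩ := hcyc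
      obtain ⟨k, hk, hkn, g, hg⟩ := exists_cycle_le hi
      have hrot : ∑ t : Fin k, x0 (g ⟨((t : ℕ) + 1) % k, Nat.mod_lt _ hk⟩)
          = ∑ t : Fin k, x0 (g t) := fin_rot_sum hk fun t => x0 (g t)
      have hsum : ∑ t : Fin k, A (g t) (g ⟨((t : ℕ) + 1) % k, Nat.mod_lt _ hk⟩)
          = (k : ℝ) * T := by
        have hterm : ∀ t : Fin k, A (g t) (g ⟨((t : ℕ) + 1) % k, Nat.mod_lt _ hk⟩)
            = T - x0 (g ⟨((t : ℕ) + 1) % k, Nat.mod_lt _ hk⟩) + x0 (g t) := by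
          intro t
          have := hg t
          rw [hrel] at this
          linarith [this]
        rw [Finset.sum_congr rfl fun t _ => hterm t]
        rw [Finset.sum_add_distrib, Finset.sum_sub_distrib, hrot]
        simp [Finset.sum_const, Finset.card_univ, mul_comm]
      have hmem : T ∈ { r : ℝ | ∃ (k : ℕ) (hk : 0 < k), k ≤ n ∧ ∃ f : Fin k → Fin n,
          r = (∑ t : Fin k, A (f t) (f ⟨((t : ℕ) + 1) % k, Nat.mod_lt _ hk⟩)) / (k : ℝ) } := by
        refine ⟨k, hk, hkn, g, ?_⟩
        rw [hsum]
        have : (k : ℝ) ≠ 0 := by positivity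
        field_simp
      exact le_csSup hbdd hmem
    · exfalso
      push_neg at hcyc
      set h : Fin n → ℕ :=
        fun i => (Finset.univ.filter fun j => Relation.TransGen rel j i).card with hh
      have hmono : ∀ i j : Fin n, rel i j → h i < h j := by
        intro i j hij
        apply Finset.card_lt_card
        constructor
        · intro a ha
          simp only [Finset.mem_filter, Finset.mem_univ, true_and] at ha ⊢
          exact ha.tail hij
        · intro hsub
          have hmem : i ∈ Finset.univ.filter fun j' => Relation.TransGen rel j' j := by
            simp only [Finset.mem_filter, Finset.mem_univ, true_and]
            exact Relation.TransGen.single hij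
          have := hsub hmem
          simp only [Finset.mem_filter, Finset.mem_univ, true_and] at this
          exact hcyc i this
      have hhn : ∀ i : Fin n, (h i : ℝ) ≤ (n : ℝ) := by
        intro i
        have : h i ≤ n := by
          have := Finset.card_filter_le (Finset.univ : Finset (Fin n))
            (fun j => Relation.TransGen rel j i)
          simpa using this
        exact_mod_cast this
      set NT : Finset (Fin n × Fin n) := Finset.univ.filter fun p => ¬ rel p.1 p.2 with hNT
      have hNTne : NT.Nonempty := by
        refine ⟨(i0, i0), ?_⟩
        simp only [hNT, Finset.mem_filter, Finset.mem_univ, true_and]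
        intro hr00
        exact hcyc i0 (Relation.TransGen.single hr00)
      set MN : ℝ := NT.sup' hNTne fun p => A p.1 p.2 + x0 p.2 - x0 p.1 with hMN
      have hMNlt : MN < T := by
        rw [hMN]
        rw [Finset.sup'_lt_iff]
        intro p hp
        have hle : A p.1 p.2 + x0 p.2 - x0 p.1 ≤ T := le_mpG A x0 p
        have hne : ¬ rel p.1 p.2 := by
          simp only [hNT, Finset.mem_filter, Finset.mem_univ, true_and] at hp
          exact hp
        rw [hrel] at hne
        exact lt_of_le_of_ne hle hne
      set δ : ℝ := T - MN with hδ
      have hδpos : 0 < δ := by rw [hδ]; linarith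
      set ε : ℝ := δ / ((n : ℝ) + 1) with hε
      have hεpos : 0 < ε := by
        rw [hε]; positivity
      have hεn : ε * (n : ℝ) < δ := by
        rw [hε, div_mul_eq_mul_div, div_lt_iff₀ (by positivity)]
        nlinarith [hδpos]
      set x1 : Fin n → ℝ := fun i => x0 i - ε * (h i : ℝ) with hx1
      have key : ∀ p : Fin n × Fin n,
          A p.1 p.2 + x1 p.2 - x1 p.1 ≤ max (T - ε) (T - δ + ε * (n : ℝ)) := by
        intro p
        by_cases hp : rel p.1 p.2
        · refine le_trans ?_ (le_max_left _ _)
          have h1 : (h p.1 : ℝ) + 1 ≤ (h p.2 : ℝ) := by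
            exact_mod_cast hmono p.1 p.2 hp
          have h2 : A p.1 p.2 + x0 p.2 - x0 p.1 = T := hp
          simp only [hx1]
          nlinarith [hεpos]
        · refine le_trans ?_ (le_max_right _ _)
          have hmem : p ∈ NT := by
            simp only [hNT, Finset.mem_filter, Finset.mem_univ, true_and]; exact hp
          have h2 : A p.1 p.2 + x0 p.2 - x0 p.1 ≤ MN :=
            Finset.le_sup' (fun p : Fin n × Fin n => A p.1 p.2 + x0 p.2 - x0 p.1) hmem
          have h3 : (0 : ℝ) ≤ (h p.2 : ℝ) := Nat.cast_nonneg _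
          have h4 : (h p.1 : ℝ) ≤ (n : ℝ) := hhn p.1
          simp only [hx1]
          have : ε * (h p.1 : ℝ) ≤ ε * (n : ℝ) := by nlinarith
          have h5 : 0 ≤ ε * (h p.2 : ℝ) := mul_nonneg hεpos.le (Nat.cast_nonneg _)
          rw [hδ]
          nlinarith
      have hcon : mpG A x1 ≤ max (T - ε) (T - δ + ε * (n : ℝ)) := mpG_le A x1 _ key
      have hlt : max (T - ε) (T - δ + ε * (n : ℝ)) < T :=
        max_lt (by linarith) (by linarith)
      have := hx0 x1
      linarith
  have hTeq : mpCycleMean A = T := le_antisymm hTlam hTle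
  constructor
  · exact ⟨x0, hTeq⟩
  · rintro y ⟨x, rfl⟩
    exact hlow x

end
end

section
/- Let n ≥ 1, let A be an n×n real matrix, and let λ = λ(A) be its maximum cycle mean. A vector x ∈ ℝ^n satisfies max_{i,j} (A_{ij} + x_j − x_i) = λ (i.e., x attains the minimum of this objective over ℝ^n) if and only if there exists u ∈ ℝ^n such that x = (A − λ)^* ⊗ u in max-plus arithmetic, where A − λ denotes the matrix with entries A_{ij} − λ. -/
open scoped BigOperators

noncomputable section

namespace MPAux

lemma le_fsup {α : Type*} [Fintype α] (f : α → ℝ) (a : α) : f a ≤ ⨆ i, f i :=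
  le_ciSup (Set.Finite.bddAbove (Set.finite_range f)) a

variable {n : ℕ}

/-- weight of the length-`L` walk `G 0, G 1, …, G L`. -/
def wgtN (B : Matrix (Fin n) (Fin n) ℝ) (G : ℕ → Fin n) (L : ℕ) : ℝ :=
  ∑ t ∈ Finset.range L, B (G t) (G (t + 1))

lemma wgt_le_pow (B : Matrix (Fin n) (Fin n) ℝ) (m : ℕ) (G : ℕ → Fin n) :
    wgtN B G (m + 1) ≤ mpPow B m (G 0) (G (m + 1)) := by
  induction m with
  | zero => simp [wgtN, mpPow]
  | succ m ih =>
    have h1 : wgtN B G (m + 2) = wgtN B G (m + 1) + B (G (m + 1)) (G (m + 2)) :=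
      Finset.sum_range_succ _ _
    have h2 : mpPow B m (G 0) (G (m + 1)) + B (G (m + 1)) (G (m + 2)) ≤
        mpPow B (m + 1) (G 0) (G (m + 2)) := by
      simpa [mpPow, mpMul] using
        le_fsup (fun k : Fin n => mpPow B m (G 0) k + B k (G (m + 2))) (G (m + 1))
    calc wgtN B G (m + 2) = wgtN B G (m + 1) + B (G (m + 1)) (G (m + 2)) := h1
      _ ≤ mpPow B m (G 0) (G (m + 1)) + B (G (m + 1)) (G (m + 2)) := by
          exact add_le_add_left ih _
      _ ≤ _ := h2

lemma pow_le_wgt (B : Matrix (Fin n) (Fin n) ℝ) (m : ℕ) (i j : Fin n) :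
    ∃ G : ℕ → Fin n, G 0 = i ∧ G (m + 1) = j ∧ mpPow B m i j ≤ wgtN B G (m + 1) := by
  induction m generalizing j with
  | zero =>
    refine ⟨fun t => if t = 0 then i else j, by simp, by simp, ?_⟩
    simp [wgtN, mpPow]
  | succ m ih =>
    have hne : Nonempty (Fin n) := ⟨i⟩
    obtain ⟨k0, hk0⟩ := Finite.exists_max (fun k : Fin n => mpPow B m i k + B k j)
    obtain ⟨G, hG0, hGm, hGw⟩ := ih k0
    refine ⟨fun t => if t ≤ m + 1 then G t else j, by simp [hG0], by simp, ?_⟩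
    have hle : mpPow B (m + 1) i j ≤ mpPow B m i k0 + B k0 j := by
      simpa [mpPow, mpMul] using ciSup_le hk0
    have hsum : wgtN B (fun t => if t ≤ m + 1 then G t else j) (m + 2) =
        wgtN B G (m + 1) + B k0 j := by
      rw [wgtN, Finset.sum_range_succ]
      have h1 : ∀ t ∈ Finset.range (m + 1),
          B ((fun t => if t ≤ m + 1 then G t else j) t)
            ((fun t => if t ≤ m + 1 then G t else j) (t + 1)) = B (G t) (G (t + 1)) := by
        intro t ht
        have ht' := Finset.mem_range.mp ht
        have : t ≤ m + 1 := by omega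
        have : t + 1 ≤ m + 1 := by omega
        simp_all
      rw [Finset.sum_congr rfl h1]
      have : (m + 1 : ℕ) ≤ m + 1 := le_refl _
      simp [wgtN, hGm]
    rw [hsum]
    exact hle.trans (add_le_add_left hGw _)

lemma star_diag_nonneg (B : Matrix (Fin n) (Fin n) ℝ) (i : Fin n) : 0 ≤ mpStar B i i := by
  simp [mpStar]

/-- cycle hypothesis: every cycle of `B` of length `≤ n` has nonpositive weight. -/
def CycNonpos (B : Matrix (Fin n) (Fin n) ℝ) : Prop :=
  ∀ (k : ℕ) (hk : 0 < k), k ≤ n → ∀ f : Fin k → Fin n,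
    (∑ t : Fin k, B (f t) (f ⟨((t : ℕ) + 1) % k, Nat.mod_lt _ hk⟩)) ≤ 0

lemma cyc_Ico (B : Matrix (Fin n) (Fin n) ℝ) (hcyc : CycNonpos B) (G : ℕ → Fin n)
    {a b : ℕ} (hab : a < b) (hbn : b ≤ n) (hG : G a = G b) :
    ∑ t ∈ Finset.Ico a b, B (G t) (G (t + 1)) ≤ 0 := by
  set k := b - a with hk
  have hk0 : 0 < k := by omega
  have h := hcyc k hk0 (by omega) (fun t => G (a + (t : ℕ)))
  have h2 : (∑ t : Fin k, B (G (a + (t : ℕ))) (G (a + ((t : ℕ) + 1) % k)))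
      = ∑ t ∈ Finset.range k, B (G (a + t)) (G (a + (t + 1) % k)) :=
    Fin.sum_univ_eq_sum_range (fun t => B (G (a + t)) (G (a + (t + 1) % k))) k
  have h3 : ∀ t ∈ Finset.range k,
      B (G (a + t)) (G (a + (t + 1) % k)) = B (G (a + t)) (G (a + t + 1)) := by
    intro t ht
    have ht' := Finset.mem_range.mp ht
    rcases Nat.lt_or_ge (t + 1) k with h | h
    · rw [Nat.mod_eq_of_lt h]; ring_nf
    · have h4 : t + 1 = k := by omega
      rw [h4, Nat.mod_self, Nat.add_zero, hG]
      have h5 : a + t + 1 = b := by omega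
      rw [h5]
  rw [Finset.sum_Ico_eq_sum_range]
  calc ∑ t ∈ Finset.range (b - a), B (G (a + t)) (G (a + t + 1))
      = ∑ t ∈ Finset.range k, B (G (a + t)) (G (a + (t + 1) % k)) := by
        refine (Finset.sum_congr rfl ?_).symm; exact h3
    _ ≤ 0 := by rw [← h2]; exact h

lemma wgt_le_star (B : Matrix (Fin n) (Fin n) ℝ) (hn2 : 2 ≤ n) (hcyc : CycNonpos B) :
    ∀ L, 1 ≤ L → ∀ G : ℕ → Fin n, wgtN B G L ≤ mpStar B (G 0) (G L) := by
  intro L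
  induction L using Nat.strong_induction_on with
  | _ L IH =>
  intro hL G
  by_cases hLn : L < n
  · have h1 : wgtN B G L ≤ mpPow B (L - 1) (G 0) (G L) := by
      have := wgt_le_pow B (L - 1) G
      have hL1 : L - 1 + 1 = L := by omega
      rwa [hL1] at this
    refine h1.trans ?_
    have hk : L - 1 < n - 1 := by omega
    have h2 : mpPow B (L - 1) (G 0) (G L) ≤ ⨆ k : Fin (n - 1), mpPow B (k : ℕ) (G 0) (G L) :=
      le_fsup (fun k : Fin (n - 1) => mpPow B (k : ℕ) (G 0) (G L)) ⟨L - 1, hk⟩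
    simp only [mpStar, Matrix.of_apply]
    split
    · exact h2.trans (le_max_right _ _)
    · exact h2
  · obtain ⟨x, y, hxy, hGxy⟩ :=
      Fintype.exists_ne_map_eq_of_card_lt (fun t : Fin (n + 1) => G (t : ℕ)) (by simp)
    obtain ⟨a, b, hab, hbn, hG⟩ : ∃ a b : ℕ, a < b ∧ b ≤ n ∧ G a = G b := by
      rcases lt_or_gt_of_ne (Fin.val_ne_of_ne hxy) with h | h
      · exact ⟨x, y, h, by omega, hGxy⟩
      · exact ⟨y, x, h, by omega, hGxy.symm⟩
    set k := b - a with hkdef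
    have hkL : k ≤ L := by omega
    have haL' : a ≤ L - k := by omega
    set G' := fun t => if t < a then G t else G (t + k) with hG'def
    set L' := L - k with hL'def
    have hG'0 : G' 0 = G 0 := by
      by_cases h0 : 0 < a
      · simp [hG'def, h0]
      · have ha0 : a = 0 := by omega
        have h1 : G' 0 = G (0 + k) := by simp [hG'def, ha0]
        rw [h1]
        have h2 : (0 : ℕ) + k = b := by omega
        rw [h2, ← hG, ha0]
    have hG'L : G' L' = G L := by
      have h1 : ¬ L' < a := by omega
      have h2 : L' + k = L := by omega
      simp [hG'def, h1, h2]
    have hsum : wgtN B G L = wgtN B G' L' + ∑ t ∈ Finset.Ico a b, B (G t) (G (t + 1)) := by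
      have e1 : ∀ t < a, B (G' t) (G' (t + 1)) = B (G t) (G (t + 1)) := by
        intro t ht
        have h1 : G' t = G t := by simp [hG'def, ht]
        have h2 : G' (t + 1) = G (t + 1) := by
          by_cases h : t + 1 < a
          · simp [hG'def, h]
          · have ha : t + 1 = a := by omega
            have hb : t + 1 + k = b := by omega
            simp only [hG'def, h, if_false, hb]
            rw [← hG, ha]
        rw [h1, h2]
      have e2 : ∀ t, a ≤ t → B (G' t) (G' (t + 1)) = B (G (t + k)) (G (t + k + 1)) := by
        intro t ht
        have h1 : ¬ t < a := by omega
        have h2 : ¬ t + 1 < a := by omega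
        have h3 : t + 1 + k = t + k + 1 := by omega
        simp [hG'def, h1, h2, h3]
      have split1 : wgtN B G' L' =
          (∑ t ∈ Finset.range a, B (G t) (G (t + 1))) +
            ∑ t ∈ Finset.Ico a L', B (G (t + k)) (G (t + k + 1)) := by
        rw [wgtN, Finset.range_eq_Ico, ← Finset.sum_Ico_consecutive _ (Nat.zero_le a) haL']
        congr 1
        · rw [← Finset.range_eq_Ico]
          exact Finset.sum_congr rfl fun t ht => e1 t (Finset.mem_range.mp ht)
        · exact Finset.sum_congr rfl fun t ht => e2 t (Finset.mem_Ico.mp ht).1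
      have shift : ∑ t ∈ Finset.Ico a L', B (G (t + k)) (G (t + k + 1)) =
          ∑ t ∈ Finset.Ico b L, B (G t) (G (t + 1)) := by
        rw [Finset.sum_Ico_eq_sum_range, Finset.sum_Ico_eq_sum_range]
        have h1 : L - b = L' - a := by omega
        rw [h1]
        refine Finset.sum_congr rfl fun t _ => ?_
        have h : a + t + k = b + t := by omega
        rw [h]
      have split2 : wgtN B G L =
          ((∑ t ∈ Finset.range a, B (G t) (G (t + 1))) +
            ∑ t ∈ Finset.Ico a b, B (G t) (G (t + 1))) +
            ∑ t ∈ Finset.Ico b L, B (G t) (G (t + 1)) := by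
        rw [wgtN, Finset.range_eq_Ico,
          ← Finset.sum_Ico_consecutive (fun t => B (G t) (G (t + 1))) (Nat.zero_le b)
            (by omega : b ≤ L),
          ← Finset.sum_Ico_consecutive (fun t => B (G t) (G (t + 1))) (Nat.zero_le a)
            (le_of_lt hab),
          ← Finset.range_eq_Ico]
      rw [split1, shift, split2]; ring
    have hcycw : ∑ t ∈ Finset.Ico a b, B (G t) (G (t + 1)) ≤ 0 := cyc_Ico B hcyc G hab hbn hG
    by_cases hL'0 : L' = 0
    · have hij : G 0 = G L := by rw [← hG'0, ← hG'L, hL'0]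
      have h0 : wgtN B G L ≤ 0 := by
        rw [hsum, hL'0]
        simp only [wgtN, Finset.range_zero, Finset.sum_empty, zero_add]
        exact hcycw
      calc wgtN B G L ≤ 0 := h0
        _ ≤ mpStar B (G 0) (G L) := by rw [hij]; exact star_diag_nonneg B (G L)
    · have hL'1 : 1 ≤ L' := by omega
      have hL'lt : L' < L := by omega
      have hrec := IH L' hL'lt hL'1 G'
      rw [hG'0, hG'L] at hrec
      calc wgtN B G L = wgtN B G' L' + ∑ t ∈ Finset.Ico a b, B (G t) (G (t + 1)) := hsum
        _ ≤ wgtN B G' L' + 0 := add_le_add_right hcycw _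
        _ = wgtN B G' L' := add_zero _
        _ ≤ _ := hrec

lemma wgt_prepend (B : Matrix (Fin n) (Fin n) ℝ) (i : Fin n) (G : ℕ → Fin n) (L : ℕ) :
    wgtN B (fun t => if t = 0 then i else G (t - 1)) (L + 1) = B i (G 0) + wgtN B G L := by
  set G' := fun t => if t = 0 then i else G (t - 1) with hG'
  rw [wgtN, Finset.sum_range_succ']
  have h0 : B (G' 0) (G' 1) = B i (G 0) := by simp [hG']
  have h1 : ∀ t ∈ Finset.range L, B (G' (t + 1)) (G' (t + 1 + 1)) = B (G t) (G (t + 1)) := by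
    intro t _
    simp [hG']
  rw [Finset.sum_congr rfl h1, h0]
  exact add_comm _ _

lemma edge_le_star (B : Matrix (Fin n) (Fin n) ℝ) (hn2 : 2 ≤ n) (hcyc : CycNonpos B)
    (i j : Fin n) : B i j ≤ mpStar B i j := by
  have h := wgt_le_star B hn2 hcyc 1 le_rfl (fun t => if t = 0 then i else j)
  simpa [wgtN] using h

lemma mul_star_le (B : Matrix (Fin n) (Fin n) ℝ) (hcyc : CycNonpos B) (i j l : Fin n) :
    B i j + mpStar B j l ≤ mpStar B i l := by
  have hn1 : 1 ≤ n := i.pos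
  by_cases hn2 : 2 ≤ n
  · haveI : Nonempty (Fin (n - 1)) := ⟨⟨0, by omega⟩⟩
    have key1 : ∀ k : Fin (n - 1), B i j + mpPow B (k : ℕ) j l ≤ mpStar B i l := by
      intro k
      obtain ⟨G, hG0, hGm, hGw⟩ := pow_le_wgt B (k : ℕ) j l
      have hpre := wgt_prepend B i G ((k : ℕ) + 1)
      have hstar := wgt_le_star B hn2 hcyc ((k : ℕ) + 2) (by omega)
        (fun t => if t = 0 then i else G (t - 1))
      have hne : ¬ ((k : ℕ) + 2 = 0) := by omega
      have he : (k : ℕ) + 2 - 1 = (k : ℕ) + 1 := by omega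
      rw [if_pos rfl, if_neg hne, he, hGm] at hstar
      calc B i j + mpPow B (k : ℕ) j l ≤ B i (G 0) + wgtN B G ((k : ℕ) + 1) := by
            rw [hG0]; exact add_le_add_right hGw _
        _ = wgtN B (fun t => if t = 0 then i else G (t - 1)) ((k : ℕ) + 2) := hpre.symm
        _ ≤ mpStar B i l := hstar
    have keysup : B i j + (⨆ k : Fin (n - 1), mpPow B (k : ℕ) j l) ≤ mpStar B i l := by
      have h2 : (⨆ k : Fin (n - 1), mpPow B (k : ℕ) j l) ≤ mpStar B i l - B i j :=
        ciSup_le fun k => by have := key1 k; linarith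
      linarith
    by_cases hjl : j = l
    · subst hjl
      have hs : mpStar B j j = max 0 (⨆ k : Fin (n - 1), mpPow B (k : ℕ) j j) := by
        simp [mpStar]
      rcases le_total (⨆ k : Fin (n - 1), mpPow B (k : ℕ) j j) 0 with h | h
      · rw [hs, max_eq_left h, add_zero]
        exact edge_le_star B hn2 hcyc i j
      · rw [hs, max_eq_right h]
        exact keysup
    · have hs : mpStar B j l = ⨆ k : Fin (n - 1), mpPow B (k : ℕ) j l := by
        simp [mpStar, hjl]
      rw [hs]; exact keysup
  · have hn : n = 1 := by omega
    subst hn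
    have hii : ∀ a b : Fin 1, a = b := fun a b => Subsingleton.elim a b
    haveI : IsEmpty (Fin (1 - 1)) := by
      simp only [Nat.sub_self]
      infer_instance
    have hsup : ∀ a b : Fin 1, (⨆ k : Fin (1 - 1), mpPow B (k : ℕ) a b) = 0 := by
      intro a b
      rw [iSup_of_empty']
      exact Real.sSup_empty
    have hstar : ∀ a b : Fin 1, mpStar B a b = 0 := by
      intro a b
      rw [hii a b]
      simp [mpStar, hsup]
    rw [hstar, hstar]
    have hB0 : B i i ≤ 0 := by
      have := hcyc 1 one_pos le_rfl (fun _ => i)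
      simpa using this
    rw [hii i j] at hB0 ⊢
    linarith

end MPAux


/-- `x` attains the minimum value `λ(A)` of `max_{i,j} (A_{ij} + x_j − x_i)`
iff `x = (A − λ)^* ⊗ u` in max-plus arithmetic for some `u ∈ ℝⁿ`. -/
theorem mp_unconstrained_minimizers {n : ℕ} (hn : 1 ≤ n) (A : Matrix (Fin n) (Fin n) ℝ)
    (lam : ℝ) (hlam : lam = mpCycleMean A) (x : Fin n → ℝ) :
    (⨆ p : Fin n × Fin n, A p.1 p.2 + x p.2 - x p.1) = lam ↔
      ∃ u : Fin n → ℝ, x = mpVecMul (mpStar (Matrix.of fun i j => A i j - lam)) u := by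
  classical
  haveI : Nonempty (Fin n) := ⟨⟨0, hn⟩⟩
  set B : Matrix (Fin n) (Fin n) ℝ := Matrix.of fun i j => A i j - lam with hBdef
  have hBapp : ∀ i j, B i j = A i j - lam := fun i j => rfl
  set S : Set ℝ := { r : ℝ | ∃ (k : ℕ) (hk : 0 < k), k ≤ n ∧ ∃ f : Fin k → Fin n,
    r = (∑ t : Fin k, A (f t) (f ⟨((t : ℕ) + 1) % k, Nat.mod_lt _ hk⟩)) / (k : ℝ) } with hSdef
  have hlamS : lam = sSup S := hlam
  have hSne : S.Nonempty :=
    ⟨_, ⟨1, one_pos, hn, fun _ => (⟨0, hn⟩ : Fin n), rfl⟩⟩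
  have hSbdd : BddAbove S := by
    refine ⟨⨆ p : Fin n × Fin n, A p.1 p.2, fun r hr => ?_⟩
    obtain ⟨k, hk, hkn, f, rfl⟩ := hr
    have hkpos : (0 : ℝ) < (k : ℝ) := by exact_mod_cast hk
    rw [div_le_iff₀ hkpos]
    calc (∑ t : Fin k, A (f t) (f ⟨((t : ℕ) + 1) % k, Nat.mod_lt _ hk⟩))
        ≤ ∑ _t : Fin k, (⨆ p : Fin n × Fin n, A p.1 p.2) := by
          refine Finset.sum_le_sum fun t _ => ?_
          exact MPAux.le_fsup (fun p : Fin n × Fin n => A p.1 p.2) (_, _)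
      _ = (⨆ p : Fin n × Fin n, A p.1 p.2) * (k : ℝ) := by
          rw [Finset.sum_const, Finset.card_univ, Fintype.card_fin, nsmul_eq_mul, mul_comm]
  have hcycB : MPAux.CycNonpos B := by
    intro k hk hkn f
    have h1 : (∑ t : Fin k, A (f t) (f ⟨((t : ℕ) + 1) % k, Nat.mod_lt _ hk⟩)) / (k : ℝ) ≤ lam := by
      rw [hlamS]
      exact le_csSup hSbdd ⟨k, hk, hkn, f, rfl⟩
    have hkpos : (0 : ℝ) < (k : ℝ) := by exact_mod_cast hk
    rw [div_le_iff₀ hkpos] at h1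
    have h3 : (∑ t : Fin k, B (f t) (f ⟨((t : ℕ) + 1) % k, Nat.mod_lt _ hk⟩))
        = (∑ t : Fin k, A (f t) (f ⟨((t : ℕ) + 1) % k, Nat.mod_lt _ hk⟩)) - (k : ℝ) * lam := by
      simp only [hBapp]
      rw [Finset.sum_sub_distrib, Finset.sum_const, Finset.card_univ, Fintype.card_fin,
        nsmul_eq_mul]
    rw [h3]
    nlinarith
  have hlow : ∀ y : Fin n → ℝ, lam ≤ ⨆ p : Fin n × Fin n, A p.1 p.2 + y p.2 - y p.1 := by
    intro y
    rw [hlamS]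
    refine csSup_le hSne fun r hr => ?_
    obtain ⟨k, hk, hkn, f, rfl⟩ := hr
    haveI : NeZero k := ⟨hk.ne'⟩
    set T := ⨆ p : Fin n × Fin n, A p.1 p.2 + y p.2 - y p.1 with hT
    set σ : Fin k → Fin k := fun t => ⟨((t : ℕ) + 1) % k, Nat.mod_lt _ hk⟩ with hσdef
    have hσ : ∀ t, σ t = t + 1 := by
      intro t
      apply Fin.ext
      rw [hσdef]
      show ((t : ℕ) + 1) % k = ((t + 1 : Fin k) : ℕ)
      rw [Fin.val_add, Fin.val_one', Nat.add_mod (t : ℕ) 1 k, Nat.mod_eq_of_lt t.isLt]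
    have htel : ∑ t : Fin k, y (f (σ t)) = ∑ t : Fin k, y (f t) := by
      simp only [hσ]
      exact Equiv.sum_comp (Equiv.addRight (1 : Fin k)) (fun t => y (f t))
    have hterm : ∀ t : Fin k, A (f t) (f (σ t)) + y (f (σ t)) - y (f t) ≤ T :=
      fun t => MPAux.le_fsup (fun p : Fin n × Fin n => A p.1 p.2 + y p.2 - y p.1) (f t, f (σ t))
    have hsum : (∑ t : Fin k, A (f t) (f (σ t))) ≤ (k : ℝ) * T := by
      have h1 : (∑ t : Fin k, A (f t) (f (σ t)))
          = ∑ t : Fin k, (A (f t) (f (σ t)) + y (f (σ t)) - y (f t)) := by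
        rw [Finset.sum_sub_distrib, Finset.sum_add_distrib, htel]
        ring
      rw [h1]
      calc (∑ t : Fin k, (A (f t) (f (σ t)) + y (f (σ t)) - y (f t)))
          ≤ ∑ _t : Fin k, T := Finset.sum_le_sum fun t _ => hterm t
        _ = (k : ℝ) * T := by
            rw [Finset.sum_const, Finset.card_univ, Fintype.card_fin, nsmul_eq_mul]
    have hkpos : (0 : ℝ) < (k : ℝ) := by exact_mod_cast hk
    rw [div_le_iff₀ hkpos]
    show (∑ t : Fin k, A (f t) (f (σ t))) ≤ T * (k : ℝ)
    rw [mul_comm]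
    exact hsum
  constructor
  · intro hx
    have hBx : ∀ i j, B i j + x j ≤ x i := by
      intro i j
      have h1 := MPAux.le_fsup (fun p : Fin n × Fin n => A p.1 p.2 + x p.2 - x p.1) (i, j)
      rw [hx] at h1
      have h2 := hlow x
      have h3 := hBapp i j
      simp only at h1
      linarith [hlow x]
    have hpow : ∀ m (i j : Fin n), mpPow B m i j + x j ≤ x i := by
      intro m
      induction m with
      | zero => exact hBx
      | succ m ih =>
        intro i j
        have h1 : mpPow B (m + 1) i j ≤ x i - x j := by
          show mpMul (mpPow B m) B i j ≤ _
          simp only [mpMul, Matrix.of_apply]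
          refine ciSup_le fun c => ?_
          have h2 := ih i c
          have h3 := hBx c j
          linarith
        linarith
    refine ⟨x, funext fun i => ?_⟩
    have hle : mpVecMul (mpStar B) x i ≤ x i := by
      refine ciSup_le fun j => ?_
      by_cases hij : i = j
      · subst hij
        have hX : (⨆ k : Fin (n - 1), mpPow B (k : ℕ) i i) ≤ 0 :=
          Real.iSup_le (fun k => by have := hpow (k : ℕ) i i; linarith) le_rfl
        have hs : mpStar B i i = max 0 (⨆ k : Fin (n - 1), mpPow B (k : ℕ) i i) := by
          simp [mpStar]
        have : mpStar B i i ≤ 0 := by rw [hs]; exact max_le le_rfl hX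
        linarith
      · have h2 : 2 ≤ n := by
          have h3 := Fin.val_ne_of_ne hij
          have := i.isLt
          have := j.isLt
          omega
        haveI : Nonempty (Fin (n - 1)) := ⟨⟨0, by omega⟩⟩
        have hs : mpStar B i j = ⨆ k : Fin (n - 1), mpPow B (k : ℕ) i j := by
          simp [mpStar, hij]
        have hX : (⨆ k : Fin (n - 1), mpPow B (k : ℕ) i j) ≤ x i - x j :=
          ciSup_le fun k => by have := hpow (k : ℕ) i j; linarith
        rw [hs]
        linarith
    have hge : x i ≤ mpVecMul (mpStar B) x i := by
      have h0 : (0 : ℝ) ≤ mpStar B i i := MPAux.star_diag_nonneg B i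
      have h1 := MPAux.le_fsup (fun j => mpStar B i j + x j) i
      calc x i ≤ mpStar B i i + x i := by linarith
        _ ≤ mpVecMul (mpStar B) x i := h1
    exact le_antisymm hge hle
  · rintro ⟨u, rfl⟩
    apply le_antisymm
    · refine ciSup_le fun p => ?_
      have hBxx : B p.1 p.2 + mpVecMul (mpStar B) u p.2 ≤ mpVecMul (mpStar B) u p.1 := by
        have h2 : (⨆ l, mpStar B p.2 l + u l) ≤ mpVecMul (mpStar B) u p.1 - B p.1 p.2 :=
          ciSup_le fun l => by
            have h3 := MPAux.mul_star_le B hcycB p.1 p.2 l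
            have h4 : mpStar B p.1 l + u l ≤ mpVecMul (mpStar B) u p.1 :=
              MPAux.le_fsup (fun l => mpStar B p.1 l + u l) l
            linarith
        show B p.1 p.2 + (⨆ l, mpStar B p.2 l + u l) ≤ mpVecMul (mpStar B) u p.1
        linarith
      have h5 := hBapp p.1 p.2
      linarith
    · exact hlow (mpVecMul (mpStar B) u)

end
end
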